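/- arXiv:1302.1124 — 6 statements merged into one kernel-verified Lean document; each statement's English description precedes it below -/
import Mathlib

section
/- Let A = K[x₁,…,xₙ] be a polynomial ring over a field K of prime characteristic p, let W ⊆ A be a multiplicatively closed subset, and let e ≥ 1. For every ideal L of the localization W⁻¹A, the contraction of the Frobenius power equals the Frobenius power of the contraction: L^{[p^e]} ∩ A = (L ∩ A)^{[p^e]}. -/
open MvPolynomial


/-- The `e`-th Frobenius power `L^{[p^e]}` of an ideal `L`: the ideal generated by
the `p^e`-th powers of the elements of `L`. -/
def frobeniusPower {R : Type*} [CommRing R] (p e : ℕ) (L : Ideal R) : Ideal R :=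
  Ideal.span ((fun a => a ^ p ^ e) '' (L : Set R))

private lemma frobPow_eq_map {R : Type*} [CommRing R] (p e : ℕ) [ExpChar R p] (L : Ideal R) :
    frobeniusPower p e L = Ideal.map (iterateFrobenius R p e) L := by
  have h : ((fun a => a ^ p ^ e) '' (L : Set R)) = ⇑(iterateFrobenius R p e) '' (L : Set R) :=
    Set.image_congr' fun a => (iterateFrobenius_def p e a).symm
  rw [frobeniusPower, h]
  rfl

private lemma mem_ideal_smul_top_iff {R M ι : Type*} [CommRing R] [AddCommGroup M] [Module R M]
    (b : Module.Basis ι R M) (I : Ideal R) (x : M) :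
    x ∈ I • (⊤ : Submodule R M) ↔ ∀ i, b.repr x i ∈ I := by
  rw [← b.span_eq, Submodule.mem_ideal_smul_span_iff_exists_sum]
  constructor
  · rintro ⟨a, ha, rfl⟩ i
    have : (a.sum fun i c => c • b i) = Finsupp.linearCombination R ⇑b a := by
      rw [Finsupp.linearCombination_apply]
    rw [this, b.repr_linearCombination]
    exact ha i
  · intro h
    exact ⟨b.repr x, h, by rw [← Finsupp.linearCombination_apply, b.linearCombination_repr]⟩

private lemma coeff_pow_pe {R σ : Type*} [CommRing R] {p : ℕ} (hp : p.Prime) [CharP R p]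
    (e : ℕ) (g : MvPolynomial σ R) (γ : σ →₀ ℕ) :
    coeff (p ^ e • γ) (g ^ p ^ e) = coeff γ g ^ p ^ e := by
  haveI : ExpChar R p := .prime hp
  haveI : ExpChar (MvPolynomial σ R) p := .prime hp
  classical
  induction g using MvPolynomial.induction_on' with
  | monomial u a =>
    have hiff : (p ^ e • u = p ^ e • γ) ↔ u = γ := by
      constructor
      · intro h
        ext j
        have := DFunLike.congr_fun h j
        simp only [Finsupp.smul_apply, smul_eq_mul] at this
        exact Nat.eq_of_mul_eq_mul_left (pow_pos hp.pos e) this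
      · rintro rfl; rfl
    simp only [monomial_pow, coeff_monomial, hiff]
    split_ifs with h
    · rfl
    · exact (zero_pow (pow_ne_zero e hp.ne_zero)).symm
  | add g1 g2 ih1 ih2 =>
    rw [add_pow_expChar_pow, coeff_add, ih1, ih2, coeff_add, add_pow_expChar_pow]

private lemma coeff_pow_pe_ne {R σ : Type*} [CommRing R] {p : ℕ} (hp : p.Prime) [CharP R p]
    (e : ℕ) (g : MvPolynomial σ R) (δ : σ →₀ ℕ) (hδ : ∀ γ, δ ≠ p ^ e • γ) :
    coeff δ (g ^ p ^ e) = 0 := by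
  haveI : ExpChar (MvPolynomial σ R) p := .prime hp
  classical
  induction g using MvPolynomial.induction_on' with
  | monomial u a =>
    rw [monomial_pow, coeff_monomial, if_neg (fun h => hδ u h.symm)]
  | add g1 g2 ih1 ih2 =>
    rw [add_pow_expChar_pow, coeff_add, ih1, ih2, add_zero]

set_option synthInstance.maxHeartbeats 1000000 in
set_option maxHeartbeats 2000000 in
private lemma kunz_cancel {p : ℕ} (hp : p.Prime) {n e : ℕ} {K : Type*} [Field K] [CharP K p]
    (J : Ideal (MvPolynomial (Fin n) K)) (w : MvPolynomial (Fin n) K)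
    (hw : ∀ y, w * y ∈ J → y ∈ J)
    (x : MvPolynomial (Fin n) K) (hx : w * x ∈ frobeniusPower p e J) :
    x ∈ frobeniusPower p e J := by
  classical
  haveI : ExpChar K p := .prime hp
  haveI : ExpChar (MvPolynomial (Fin n) K) p := .prime hp
  set q := p ^ e with hqdef
  have hq0 : q ≠ 0 := pow_ne_zero e hp.ne_zero
  have hqpos : 0 < q := Nat.pos_of_ne_zero hq0
  set φ := iterateFrobenius (MvPolynomial (Fin n) K) p e with hφdef
  have hφ_apply : ∀ g : MvPolynomial (Fin n) K, φ g = g ^ q := fun g => iterateFrobenius_def p e g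
  set R₀ := φ.range with hR₀def
  set fK := iterateFrobenius K p e with hfKdef
  have hfK_apply : ∀ c : K, fK c = c ^ q := fun c => iterateFrobenius_def p e c
  set K' := fK.fieldRange with hK'def
  set bK := Module.Basis.ofVectorSpace K' K with hbKdef
  set res : (Fin n → Fin q) → (Fin n →₀ ℕ) :=
    fun β => Finsupp.equivFunOnFinite.symm (fun j => (β j : ℕ)) with hresdef
  have hres_apply : ∀ β j, res β j = (β j : ℕ) := fun β j => rfl
  set v : (Fin n → Fin q) × (Module.Basis.ofVectorSpaceIndex K' K) → MvPolynomial (Fin n) K :=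
    fun i => monomial (res i.1) (i.2 : K) with hvdef
  -- Linear independence of `v` over `R₀`
  have hLI : LinearIndependent R₀ v := by
    rw [linearIndependent_iff']
    intro s c hsum i₀ hi₀
    choose g hg using fun i : (Fin n → Fin q) × (Module.Basis.ofVectorSpaceIndex K' K) =>
      RingHom.mem_range.mp (c i).2
    have hcoeff : ∀ γ : Fin n →₀ ℕ, coeff γ (g i₀) = 0 := by
      intro γ
      have h0 := congrArg (coeff (q • γ + res i₀.1)) hsum
      rw [coeff_zero, coeff_sum] at h0
      have hterm : ∀ i ∈ s, coeff (q • γ + res i₀.1) (c i • v i) =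
          if i.1 = i₀.1 then coeff γ (g i) ^ q * (i.2 : K) else 0 := by
        intro i _
        have hrw : (c i • v i : MvPolynomial (Fin n) K)
            = g i ^ q * monomial (res i.1) (i.2 : K) := by
          show (c i : MvPolynomial (Fin n) K) * v i = _
          rw [← hg i, hφ_apply]
        rw [hrw]
        by_cases hb : i.1 = i₀.1
        · rw [if_pos hb, hb, coeff_mul_monomial, coeff_pow_pe hp]
        · rw [if_neg hb, coeff_mul_monomial']
          split_ifs with hle
          · rw [coeff_pow_pe_ne hp, zero_mul]
            intro α hα
            have heq : q • γ + res i₀.1 = q • α + res i.1 := by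
              rw [← tsub_add_cancel_of_le hle, hα]
            apply hb
            funext j
            have hj := DFunLike.congr_fun heq j
            simp only [Finsupp.add_apply, Finsupp.smul_apply, smul_eq_mul, hres_apply] at hj
            have : (i.1 j : ℕ) = (i₀.1 j : ℕ) :=
              calc (i.1 j : ℕ) = ((i.1 j : ℕ) + q * α j) % q := by
                    rw [Nat.add_mul_mod_self_left, Nat.mod_eq_of_lt (i.1 j).isLt]
                _ = ((i₀.1 j : ℕ) + q * γ j) % q := by
                    rw [add_comm ((i.1 j : ℕ)), add_comm ((i₀.1 j : ℕ)), hj]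
                _ = (i₀.1 j : ℕ) := by
                    rw [Nat.add_mul_mod_self_left, Nat.mod_eq_of_lt (i₀.1 j).isLt]
            exact Fin.ext this
          · rfl
      rw [Finset.sum_congr rfl hterm, ← Finset.sum_filter] at h0
      set sf := s.filter (fun i => i.1 = i₀.1) with hsfdef
      have hinj : ∀ a ∈ sf, ∀ b ∈ sf, a.2 = b.2 → a = b := by
        intro a ha b hb hab
        have ha' := (Finset.mem_filter.mp ha).2
        have hb' := (Finset.mem_filter.mp hb).2
        exact Prod.ext (ha'.trans hb'.symm) hab
      have himg : ∑ t ∈ sf.image Prod.snd, coeff γ (g (i₀.1, t)) ^ q * (t : K) = 0 := by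
        rw [Finset.sum_image hinj, ← h0]
        apply Finset.sum_congr rfl
        intro i hi
        have : (i₀.1, i.2) = i := Prod.ext (Finset.mem_filter.mp hi).2.symm rfl
        rw [this]
      have hli' := linearIndependent_iff'.mp bK.linearIndependent (sf.image Prod.snd)
        (fun t => (⟨fK (coeff γ (g (i₀.1, t))), ⟨_, rfl⟩⟩ : K')) ?_ i₀.2 ?_
      · have : fK (coeff γ (g (i₀.1, i₀.2))) = 0 := congrArg Subtype.val hli'
        rw [Prod.mk.eta] at this
        rw [hfK_apply] at this
        exact pow_eq_zero_iff hq0 |>.mp this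
      · rw [← himg]
        apply Finset.sum_congr rfl
        intro t _
        show (fK (coeff γ (g (i₀.1, t))) : K) * bK t = _
        rw [hbKdef, Module.Basis.coe_ofVectorSpace, hfK_apply]
      · apply Finset.mem_image_of_mem
        rw [hsfdef, Finset.mem_filter]
        exact ⟨hi₀, rfl⟩
    have hg0 : g i₀ = 0 := MvPolynomial.ext _ _ fun γ => by rw [hcoeff γ, coeff_zero]
    apply Subtype.ext
    rw [← hg i₀, hg0, map_zero]
    rfl
  -- Spanning
  have hspan : ⊤ ≤ Submodule.span R₀ (Set.range v) := by
    intro f hf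
    clear hf
    induction f using MvPolynomial.induction_on' with
    | add f1 f2 h1 h2 => exact Submodule.add_mem _ h1 h2
    | monomial δ a =>
      set γ : Fin n →₀ ℕ := δ.mapRange (· / q) (Nat.zero_div q) with hγdef
      set β : Fin n → Fin q := fun j => ⟨δ j % q, Nat.mod_lt _ hqpos⟩ with hβdef
      have hδ : q • γ + res β = δ := by
        ext j
        simp only [Finsupp.add_apply, Finsupp.smul_apply, smul_eq_mul, hres_apply,
          hγdef, Finsupp.mapRange_apply, hβdef]
        exact Nat.div_add_mod (δ j) q
      have key : ∀ t : Module.Basis.ofVectorSpaceIndex K' K,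
          monomial δ ((bK.repr a t : K) * (t : K)) ∈ Submodule.span R₀ (Set.range v) := by
        intro t
        obtain ⟨d, hd⟩ := RingHom.mem_fieldRange.mp (bK.repr a t).2
        have hrw : monomial δ ((bK.repr a t : K) * (t : K))
            = (⟨φ (monomial γ d), RingHom.mem_range_self φ _⟩ : R₀) • v (β, t) := by
          show _ = φ (monomial γ d) * monomial (res β) (t : K)
          rw [hφ_apply, monomial_pow, monomial_mul, hδ, ← hd, hfK_apply]
        rw [hrw]
        exact Submodule.smul_mem _ _ (Submodule.subset_span ⟨(β, t), rfl⟩)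
      have hsum : (monomial δ) a
          = ∑ t ∈ (bK.repr a).support, monomial δ ((bK.repr a t : K) * (t : K)) := by
        conv_lhs => rw [← bK.linearCombination_repr a]
        rw [Finsupp.linearCombination_apply, Finsupp.sum, map_sum]
        apply Finset.sum_congr rfl
        intro t _
        congr 1
        rw [hbKdef, Module.Basis.coe_ofVectorSpace]
        rfl
      rw [hsum]
      exact sum_mem fun t _ => key t
  set b := Module.Basis.mk hLI hspan with hbdef
  -- membership characterization
  have hmem : ∀ z : MvPolynomial (Fin n) K, z ∈ frobeniusPower p e J ↔
      z ∈ (J.map φ.rangeRestrict) • (⊤ : Submodule R₀ (MvPolynomial (Fin n) K)) := by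
    intro z
    rw [frobPow_eq_map, ← hφdef]
    constructor
    · intro hz
      refine Submodule.span_induction ?_ ?_ ?_ ?_ hz
      · rintro y ⟨j, hj, rfl⟩
        have hy : φ j = (⟨φ j, RingHom.mem_range_self φ j⟩ : R₀) • (1 : MvPolynomial (Fin n) K) :=
          (mul_one _).symm
        rw [hy]
        exact Submodule.smul_mem_smul (Ideal.mem_map_of_mem _ hj) Submodule.mem_top
      · exact Submodule.zero_mem _
      · intro y1 y2 _ _ h1 h2
        exact Submodule.add_mem _ h1 h2
      · intro r y _ hy
        refine Submodule.smul_induction_on hy ?_ ?_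
        · intro r₀ hr₀ m _
          have : r • (r₀ • m) = r₀ • (r * m) := by
            show r * ((r₀ : MvPolynomial (Fin n) K) * m) = (r₀ : MvPolynomial (Fin n) K) * (r * m)
            ring
          rw [this]
          exact Submodule.smul_mem_smul hr₀ Submodule.mem_top
        · intro y1 y2 h1 h2
          rw [smul_add]
          exact Submodule.add_mem _ h1 h2
    · intro hz
      refine Submodule.smul_induction_on hz ?_ ?_
      · intro r₀ hr₀ m _
        obtain ⟨j, hj, hj'⟩ :=
          (Ideal.mem_map_iff_of_surjective _ φ.rangeRestrict_surjective).mp hr₀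
        have hval : (r₀ : MvPolynomial (Fin n) K) = φ j := by rw [← hj']; rfl
        show (r₀ : MvPolynomial (Fin n) K) * m ∈ _
        rw [hval]
        exact Ideal.mul_mem_right _ _ (Ideal.mem_map_of_mem φ hj)
      · intro y1 y2 h1 h2
        exact Submodule.add_mem _ h1 h2
  -- saturation of the contracted ideal in R₀
  set w₀ : R₀ := ⟨φ w, RingHom.mem_range_self φ w⟩ with hw₀def
  have hsat : ∀ z : R₀, w₀ * z ∈ J.map φ.rangeRestrict →
      z ∈ J.map φ.rangeRestrict := by
    intro z hz
    obtain ⟨y, hy⟩ := φ.rangeRestrict_surjective z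
    have hz2 : φ.rangeRestrict (w * y) ∈ J.map φ.rangeRestrict := by
      rw [map_mul, hy]
      exact hz
    obtain ⟨j, hj, hj'⟩ :=
      (Ideal.mem_map_iff_of_surjective _ φ.rangeRestrict_surjective).mp hz2
    have hφeq : φ j = φ (w * y) := congrArg Subtype.val hj'
    have hwy : w * y ∈ J := by
      have : j = w * y := iterateFrobenius_inj (MvPolynomial (Fin n) K) p e hφeq
      rw [← this]
      exact hj
    rw [← hy]
    exact Ideal.mem_map_of_mem _ (hw y hwy)
  -- conclusion
  have hx2 : w ^ q * x ∈ frobeniusPower p e J := by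
    have : w ^ q * x = w ^ (q - 1) * (w * x) := by
      rw [← mul_assoc, ← pow_succ, Nat.sub_add_cancel hqpos]
    rw [this]
    exact Ideal.mul_mem_left _ _ hx
  have hx3 : w₀ • x ∈
      (J.map φ.rangeRestrict) • (⊤ : Submodule R₀ (MvPolynomial (Fin n) K)) := by
    have : w₀ • x = w ^ q * x := by
      show φ w * x = w ^ q * x
      rw [hφ_apply]
    rw [this]
    exact (hmem _).mp hx2
  rw [mem_ideal_smul_top_iff b] at hx3
  refine (hmem x).mpr ((mem_ideal_smul_top_iff b _ x).mpr fun i => ?_)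
  have := hx3 i
  rw [map_smul, Finsupp.smul_apply, smul_eq_mul] at this
  exact hsat _ this


/-- Let `A = K[x₁, …, xₙ]` be a polynomial ring over a field `K` of prime
characteristic `p`, let `W ⊆ A` be multiplicatively closed and `e ≥ 1`. For every
ideal `L ⊆ W⁻¹A`, contraction commutes with Frobenius powers:
`L^{[p^e]} ∩ A = (L ∩ A)^{[p^e]}`. -/
theorem frobeniusPower_comap_localization (p n : ℕ) (hp : p.Prime)
    (K : Type*) [Field K] [CharP K p]
    (W : Submonoid (MvPolynomial (Fin n) K)) (e : ℕ) (he : 1 ≤ e)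
    (L : Ideal (Localization W)) :
    (frobeniusPower p e L).comap
        (algebraMap (MvPolynomial (Fin n) K) (Localization W)) =
      frobeniusPower p e
        (L.comap (algebraMap (MvPolynomial (Fin n) K) (Localization W))) := by
  classical
  set alg := algebraMap (MvPolynomial (Fin n) K) (Localization W) with halg
  apply le_antisymm
  · -- hard direction
    intro x hx
    rw [Ideal.mem_comap] at hx
    have hsatJ : ∀ w ∈ W, ∀ y, w * y ∈ L.comap alg → y ∈ L.comap alg := by
      intro w hwW y hy
      rw [Ideal.mem_comap, map_mul] at hy
      rw [Ideal.mem_comap]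
      obtain ⟨u, hu⟩ := IsLocalization.map_units (Localization W) (⟨w, hwW⟩ : W)
      rw [← hu] at hy
      have h2 := L.mul_mem_left (↑u⁻¹) hy
      rwa [← mul_assoc, Units.inv_mul, one_mul] at h2
    have hP : ∃ w ∈ W, w * x ∈ frobeniusPower p e (L.comap alg) := by
      have hx' : alg x ∈ Ideal.span ((fun a => a ^ p ^ e) '' (L : Set (Localization W))) := hx
      have main : ∀ y ∈ Ideal.span ((fun a => a ^ p ^ e) '' (L : Set (Localization W))),
          ∃ w ∈ W, ∃ a ∈ frobeniusPower p e (L.comap alg), y * alg w = alg a := by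
        intro y hy
        refine Submodule.span_induction ?_ ?_ ?_ ?_ hy
        · rintro _ ⟨z, hz, rfl⟩
          obtain ⟨⟨bb, u⟩, hbu⟩ := IsLocalization.surj W z
          have hbb : bb ∈ L.comap alg := by
            rw [Ideal.mem_comap, ← hbu]
            exact Ideal.mul_mem_right _ _ hz
          refine ⟨(u : MvPolynomial (Fin n) K) ^ p ^ e, pow_mem u.2 _, bb ^ p ^ e,
            Ideal.subset_span ⟨bb, hbb, rfl⟩, ?_⟩
          rw [map_pow, map_pow, ← hbu, mul_pow]
        · exact ⟨1, one_mem W, 0, Ideal.zero_mem _, by simp⟩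
        · rintro y1 y2 _ _ ⟨w1, hw1, a1, ha1, he1⟩ ⟨w2, hw2, a2, ha2, he2⟩
          refine ⟨w1 * w2, mul_mem hw1 hw2, a1 * w2 + a2 * w1,
            Ideal.add_mem _ (Ideal.mul_mem_right _ _ ha1) (Ideal.mul_mem_right _ _ ha2), ?_⟩
          calc (y1 + y2) * alg (w1 * w2)
              = (y1 * alg w1) * alg w2 + (y2 * alg w2) * alg w1 := by rw [map_mul]; ring
            _ = alg a1 * alg w2 + alg a2 * alg w1 := by rw [he1, he2]
            _ = alg (a1 * w2 + a2 * w1) := by rw [map_add, map_mul, map_mul]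
        · rintro r y hyspan ⟨w1, hw1, a1, ha1, he1⟩
          obtain ⟨⟨cc, vv⟩, hcv⟩ := IsLocalization.surj W r
          refine ⟨w1 * ↑vv, mul_mem hw1 vv.2, cc * a1, Ideal.mul_mem_left _ _ ha1, ?_⟩
          calc (r • y) * alg (w1 * ↑vv)
              = (r * alg ↑vv) * (y * alg w1) := by rw [smul_eq_mul, map_mul]; ring
            _ = alg cc * alg a1 := by rw [hcv, he1]
            _ = alg (cc * a1) := (map_mul _ _ _).symm
      obtain ⟨w, hwW, a, ha, heq⟩ := main _ hx'
      rw [← map_mul] at heq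
      obtain ⟨c, hc⟩ := (IsLocalization.eq_iff_exists W (Localization W)).mp heq
      refine ⟨↑c * w, mul_mem c.2 hwW, ?_⟩
      have hrw : (↑c * w) * x = ↑c * a := by rw [← hc]; ring
      rw [hrw]
      exact Ideal.mul_mem_left _ _ ha
    obtain ⟨w, hwW, hwx⟩ := hP
    exact kunz_cancel hp _ w (hsatJ w hwW) x hwx
  · -- easy direction
    apply Ideal.span_le.mpr
    rintro _ ⟨a, ha, rfl⟩
    rw [SetLike.mem_coe, Ideal.mem_comap, map_pow]
    exact Ideal.subset_span ⟨alg a, ha, rfl⟩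
end

section
/- Let A = K[x₁,…,xₙ] be a polynomial ring over a field K of prime characteristic p, let W ⊆ A be a multiplicatively closed subset, let J be an ideal of A, and let e ≥ 1. Suppose L₀ is the smallest ideal of A (with respect to inclusion) such that W⁻¹J ∩ A ⊆ L₀^{[p^e]}, i.e. L₀ = I_e(W⁻¹J ∩ A). Then the extension W⁻¹L₀ is the smallest ideal L of W⁻¹A such that W⁻¹J ⊆ L^{[p^e]}; in other words, I_e(W⁻¹J) exists and I_e(W⁻¹J) = W⁻¹ I_e(W⁻¹J ∩ A). -/
set_option linter.unusedSectionVars false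
set_option maxHeartbeats 1000000

section Aux

open MvPolynomial

lemma frobeniusPower_mono {R : Type*} [CommRing R] (p e : ℕ) {I J : Ideal R} (h : I ≤ J) :
    frobeniusPower p e I ≤ frobeniusPower p e J :=
  Ideal.span_mono (Set.image_mono h)

/-- Frobenius-semilinear coordinates on `K` relative to the subfield `K^{p^e}`. -/
lemma exists_K_components (K : Type*) [Field K] (p : ℕ) [Fact p.Prime] [CharP K p] (e : ℕ) :
    ∃ (co : K → K → K) (sK : K → Finset K),
      (∀ l c d, co l (c + d) = co l c + co l d) ∧
      (∀ l c d, co l (c ^ p ^ e * d) = c * co l d) ∧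
      (∀ (c : K) (T : Finset K), sK c ⊆ T → c = ∑ l ∈ T, (co l c) ^ p ^ e * l) := by
  classical
  set F := iterateFrobenius K p e with hF
  have hFapp : ∀ x : K, F x = x ^ p ^ e := fun x => iterateFrobenius_def p e x
  set K' := F.fieldRange with hK'
  set b := Module.Basis.ofVectorSpace K' K with hb
  have hinj : Function.Injective F := F.injective
  have hFinv : ∀ y : K', ∃ x : K, F x = (y : K) := fun y => RingHom.mem_fieldRange.mp y.2
  set Finv : K' → K := fun y => (hFinv y).choose with hFinvdef
  have hFFinv : ∀ y : K', F (Finv y) = (y : K) := fun y => (hFinv y).choose_spec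
  have hFinv_add : ∀ y z : K', Finv (y + z) = Finv y + Finv z := by
    intro y z
    apply hinj
    rw [map_add, hFFinv, hFFinv, hFFinv, Subfield.coe_add]
  have hFinv_zero : Finv 0 = 0 := by
    apply hinj; rw [hFFinv, map_zero]; rfl
  have hFinv_mul : ∀ y z : K', Finv (y * z) = Finv y * Finv z := by
    intro y z
    apply hinj
    rw [map_mul, hFFinv, hFFinv, hFFinv, Subfield.coe_mul]
  set co : K → K → K := fun l c =>
    if h : l ∈ Module.Basis.ofVectorSpaceIndex K' K then Finv (b.repr c ⟨l, h⟩) else 0 with hco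
  have hco_apply : ∀ (l : Module.Basis.ofVectorSpaceIndex K' K) (c : K),
      co (l : K) c = Finv (b.repr c l) := by
    intro l c
    rw [hco]
    simp only [dif_pos l.2, Subtype.coe_eta]
  set sK : K → Finset K := fun c => (b.repr c).support.image Subtype.val with hsK
  refine ⟨co, sK, ?_, ?_, ?_⟩
  · intro l c d
    by_cases h : l ∈ Module.Basis.ofVectorSpaceIndex K' K
    · rw [hco]
      simp only [dif_pos h, map_add, Finsupp.add_apply, hFinv_add]
    · rw [hco]; simp [dif_neg h]
  · intro l c d
    by_cases h : l ∈ Module.Basis.ofVectorSpaceIndex K' K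
    · rw [hco]
      simp only [dif_pos h]
      have hc : c ^ p ^ e * d = (⟨F c, ⟨c, rfl⟩⟩ : K') • d := by
        rw [← hFapp c]; rfl
      rw [hc, map_smul, Finsupp.smul_apply, smul_eq_mul, hFinv_mul]
      congr 1
      apply hinj
      rw [hFFinv]
    · rw [hco]; simp [dif_neg h]
  · intro c T hT
    rw [← Finset.sum_subset hT ?vanish]
    case vanish =>
      intro l _ hl
      by_cases h : l ∈ Module.Basis.ofVectorSpaceIndex K' K
      · have hrepr : b.repr c ⟨l, h⟩ = 0 := by
          by_contra hne
          exact hl (Finset.mem_image.mpr ⟨⟨l, h⟩, Finsupp.mem_support_iff.mpr hne, rfl⟩)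
        have : co l c = 0 := by rw [hco]; simp only [dif_pos h, hrepr, hFinv_zero]
        rw [this, zero_pow (pow_pos (Fact.out : p.Prime).pos e).ne', zero_mul]
      · have : co l c = 0 := by rw [hco]; simp only [dif_neg h]
        rw [this, zero_pow (pow_pos (Fact.out : p.Prime).pos e).ne', zero_mul]
    show c = ∑ l ∈ (b.repr c).support.image Subtype.val, (co l c) ^ p ^ e * l
    rw [Finset.sum_image (f := fun l => (co l c) ^ p ^ e * l)
      (fun x _ y _ hxy => Subtype.ext hxy)]
    have htot := b.linearCombination_repr c
    rw [Finsupp.linearCombination_apply, Finsupp.sum] at htot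
    conv_lhs => rw [← htot]
    apply Finset.sum_congr rfl
    intro l _
    rw [hco_apply]
    have h1 : (Finv (b.repr c l)) ^ p ^ e = (b.repr c l : K) := by
      rw [← hFapp, hFFinv]
    rw [h1, Module.Basis.ofVectorSpace_apply_self]
    exact (Algebra.smul_def _ _).trans rfl

section Components

variable {K : Type*} [Field K] {p : ℕ} [Fact p.Prime] [CharP K p] {e : ℕ}
variable {σ : Type*} [DecidableEq σ]

/-- divide a multi-exponent componentwise by `q` -/
noncomputable def fpDiv (q : ℕ) (β : σ →₀ ℕ) : σ →₀ ℕ := β.mapRange (· / q) (Nat.zero_div q)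

/-- reduce a multi-exponent componentwise mod `q` -/
noncomputable def fpMod (q : ℕ) (β : σ →₀ ℕ) : σ →₀ ℕ := β.mapRange (· % q) (Nat.zero_mod q)

lemma fpDiv_add_fpMod (q : ℕ) (β : σ →₀ ℕ) : q • fpDiv q β + fpMod q β = β := by
  ext i
  simp only [fpDiv, fpMod, Finsupp.add_apply, Finsupp.smul_apply, Finsupp.mapRange_apply,
    smul_eq_mul]
  rw [mul_comm]; exact Nat.div_add_mod' (β i) q

lemma fpMod_shift (q : ℕ) (δ β : σ →₀ ℕ) : fpMod q (q • δ + β) = fpMod q β := by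
  ext i
  simp only [fpMod, Finsupp.mapRange_apply, Finsupp.add_apply, Finsupp.smul_apply, smul_eq_mul]
  exact Nat.mul_add_mod q (δ i) (β i)

lemma fpDiv_shift {q : ℕ} (hq : 0 < q) (δ β : σ →₀ ℕ) :
    fpDiv q (q • δ + β) = δ + fpDiv q β := by
  ext i
  simp only [fpDiv, Finsupp.mapRange_apply, Finsupp.add_apply, Finsupp.smul_apply, smul_eq_mul]
  exact Nat.mul_add_div hq (δ i) (β i)

/-- the `(l, α)` Frobenius component of a polynomial, relative to coordinates `co` on `K` -/
noncomputable def fpComp (q : ℕ) (co : K → K → K) (j : K × (σ →₀ ℕ))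
    (x : MvPolynomial σ K) : MvPolynomial σ K :=
  ∑ β ∈ x.support, if fpMod q β = j.2 then monomial (fpDiv q β) (co j.1 (coeff β x)) else 0

variable {co : K → K → K}

lemma fpComp_eq_sum_subset (q : ℕ) (hco0 : ∀ l, co l 0 = 0) (j : K × (σ →₀ ℕ))
    {x : MvPolynomial σ K} {T : Finset (σ →₀ ℕ)} (hT : x.support ⊆ T) :
    fpComp q co j x =
      ∑ β ∈ T, if fpMod q β = j.2 then monomial (fpDiv q β) (co j.1 (coeff β x)) else 0 := by
  rw [fpComp]
  apply Finset.sum_subset hT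
  intro β _ hβ
  rw [notMem_support_iff.mp hβ, hco0, map_zero]
  simp

lemma fpComp_zero (q : ℕ) (j : K × (σ →₀ ℕ)) : fpComp q co j 0 = 0 := by
  rw [fpComp]
  simp

lemma fpComp_add (q : ℕ) (hco0 : ∀ l, co l 0 = 0)
    (hcoadd : ∀ l c d, co l (c + d) = co l c + co l d)
    (j : K × (σ →₀ ℕ)) (x y : MvPolynomial σ K) :
    fpComp q co j (x + y) = fpComp q co j x + fpComp q co j y := by
  rw [fpComp_eq_sum_subset q hco0 j (T := x.support ∪ y.support)
      (MvPolynomial.support_add),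
    fpComp_eq_sum_subset q hco0 j (T := x.support ∪ y.support)
      (Finset.subset_union_left),
    fpComp_eq_sum_subset q hco0 j (T := x.support ∪ y.support)
      (Finset.subset_union_right), ← Finset.sum_add_distrib]
  apply Finset.sum_congr rfl
  intro β _
  rw [coeff_add, hcoadd, map_add]
  split_ifs with h
  · rfl
  · rw [add_zero]

lemma fpComp_monomial (q : ℕ) (hco0 : ∀ l, co l 0 = 0) (j : K × (σ →₀ ℕ))
    (β : σ →₀ ℕ) (c : K) :
    fpComp q co j (monomial β c) =
      if fpMod q β = j.2 then monomial (fpDiv q β) (co j.1 c) else 0 := by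
  classical
  by_cases hc : c = 0
  · subst hc
    rw [map_zero, fpComp_zero q, hco0, map_zero]
    simp
  · rw [fpComp, support_monomial, if_neg hc, Finset.sum_singleton, coeff_monomial, if_pos rfl]

lemma fpComp_semilinear (hq : 0 < p ^ e) (hco0 : ∀ l, co l 0 = 0)
    (hcoadd : ∀ l c d, co l (c + d) = co l c + co l d)
    (hcosemi : ∀ l c d, co l (c ^ p ^ e * d) = c * co l d)
    (j : K × (σ →₀ ℕ)) (g x : MvPolynomial σ K) :
    fpComp (p ^ e) co j (g ^ p ^ e * x) = g * fpComp (p ^ e) co j x := by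
  induction g using MvPolynomial.induction_on' with
  | monomial δ d =>
    induction x using MvPolynomial.induction_on' with
    | monomial β c =>
      rw [monomial_pow, monomial_mul, fpComp_monomial _ hco0, fpComp_monomial _ hco0,
        fpMod_shift, fpDiv_shift hq, hcosemi]
      split_ifs with h
      · rw [monomial_mul]
      · rw [mul_zero]
    | add x₁ x₂ hx₁ hx₂ =>
      rw [mul_add, fpComp_add _ hco0 hcoadd, hx₁, hx₂, fpComp_add _ hco0 hcoadd, mul_add]
  | add g₁ g₂ hg₁ hg₂ =>
    rw [add_pow_char_pow, add_mul, fpComp_add _ hco0 hcoadd, hg₁, hg₂, add_mul]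

lemma fpComp_finsetSum (q : ℕ) (hco0 : ∀ l, co l 0 = 0)
    (hcoadd : ∀ l c d, co l (c + d) = co l c + co l d)
    (j : K × (σ →₀ ℕ)) {ι : Type*} (s : Finset ι) (h : ι → MvPolynomial σ K) :
    fpComp q co j (∑ i ∈ s, h i) = ∑ i ∈ s, fpComp q co j (h i) := by
  classical
  induction s using Finset.induction_on with
  | empty => simp [fpComp_zero]
  | insert _ _ hi ih =>
    rw [Finset.sum_insert hi, Finset.sum_insert hi, fpComp_add _ hco0 hcoadd, ih]

lemma fpComp_rep (hq : 0 < p ^ e) (hco0 : ∀ l, co l 0 = 0)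
    (sK : K → Finset K)
    (hcorep : ∀ (c : K) (T : Finset K), sK c ⊆ T → c = ∑ l ∈ T, (co l c) ^ p ^ e * l)
    (x : MvPolynomial σ K) :
    ∃ s : Finset (K × (σ →₀ ℕ)),
      x = ∑ j ∈ s, (fpComp (p ^ e) co j x) ^ p ^ e * (C j.1 * monomial j.2 (1 : K)) := by
  classical
  set Lx : Finset K := x.support.biUnion (fun β => sK (coeff β x)) with hLx
  set Ax : Finset ((σ →₀ ℕ)) := x.support.image (fpMod (p ^ e)) with hAx
  refine ⟨Lx ×ˢ Ax, ?_⟩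
  rw [Finset.sum_product]
  have step1 : ∀ l α, (fpComp (p ^ e) co (l, α) x) ^ p ^ e * (C l * monomial α (1 : K)) =
      ∑ β ∈ x.support, if fpMod (p ^ e) β = α then
        monomial ((p ^ e) • fpDiv (p ^ e) β + (0 + α)) ((co l (coeff β x)) ^ p ^ e * (l * 1))
      else 0 := by
    intro l α
    rw [fpComp, sum_pow_char_pow, Finset.sum_mul]
    apply Finset.sum_congr rfl
    intro β _
    rw [ite_pow, ite_mul, zero_pow hq.ne', zero_mul, monomial_pow]
    split_ifs with h
    · rw [C_apply, monomial_mul, monomial_mul]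
    · rfl
  have step2 : ∀ l, ∑ α ∈ Ax, (fpComp (p ^ e) co (l, α) x) ^ p ^ e * (C l * monomial α (1 : K)) =
      ∑ β ∈ x.support, monomial β ((co l (coeff β x)) ^ p ^ e * l) := by
    intro l
    rw [Finset.sum_congr rfl (fun α _ => step1 l α), Finset.sum_comm]
    apply Finset.sum_congr rfl
    intro β hβ
    rw [Finset.sum_ite_eq Ax (fpMod (p ^ e) β)
      (fun α => monomial ((p ^ e) • fpDiv (p ^ e) β + (0 + α))
        ((co l (coeff β x)) ^ p ^ e * (l * 1))),
      if_pos (Finset.mem_image_of_mem _ hβ), zero_add, fpDiv_add_fpMod, mul_one]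
  calc x = ∑ β ∈ x.support, monomial β (coeff β x) := (support_sum_monomial_coeff x).symm
    _ = ∑ β ∈ x.support, monomial β (∑ l ∈ Lx, (co l (coeff β x)) ^ p ^ e * l) := by
        apply Finset.sum_congr rfl
        intro β hβ
        congr 1
        have hsub : sK (coeff β x) ⊆ Lx :=
          Finset.subset_biUnion_of_mem (fun β => sK (coeff β x)) hβ
        exact hcorep (coeff β x) Lx hsub
    _ = ∑ β ∈ x.support, ∑ l ∈ Lx, monomial β ((co l (coeff β x)) ^ p ^ e * l) := by
        apply Finset.sum_congr rfl
        intro β _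
        exact map_sum (monomial β) _ _
    _ = ∑ l ∈ Lx, ∑ β ∈ x.support, monomial β ((co l (coeff β x)) ^ p ^ e * l) :=
        Finset.sum_comm
    _ = ∑ l ∈ Lx, ∑ α ∈ Ax, (fpComp (p ^ e) co (l, α) x) ^ p ^ e * (C l * monomial α (1 : K)) :=
        (Finset.sum_congr rfl (fun l _ => (step2 l).symm))

end Components

/-- The key "flatness of Frobenius" fact for polynomial rings:
if `w ^ q * a ∈ I^{[q]}` then `a ∈ (I : w)^{[q]}`. -/
lemma fp_key {K : Type*} [Field K] {p : ℕ} [Fact p.Prime] [CharP K p] (e : ℕ)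
    {σ : Type*} [DecidableEq σ]
    (I : Ideal (MvPolynomial σ K)) (w a : MvPolynomial σ K)
    (h : w ^ p ^ e * a ∈ frobeniusPower p e I) :
    a ∈ frobeniusPower p e (I.colon (Ideal.span {w})) := by
  classical
  have hq : 0 < p ^ e := pow_pos (Fact.out : p.Prime).pos e
  obtain ⟨co, sK, hcoadd, hcosemi, hcorep⟩ := exists_K_components K p e
  have hco0 : ∀ l, co l 0 = 0 := by
    intro l
    have h0 := hcoadd l 0 0
    rw [add_zero] at h0
    exact (add_eq_left.mp h0.symm)
  rw [frobeniusPower] at h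
  obtain ⟨m, fc, g, hsum⟩ := Submodule.mem_span_set'.mp h
  choose u hu hgu using fun i => (g i).2
  have hcomp : ∀ j, fpComp (p ^ e) co j a ∈ I.colon (Ideal.span {w}) := by
    intro j
    rw [Ideal.mem_colon_span_singleton]
    have h1 : w ^ p ^ e * a = ∑ i, fc i * (u i ^ p ^ e) := by
      rw [← hsum]
      apply Finset.sum_congr rfl
      intro i _
      rw [smul_eq_mul, ← hgu]
    have h2 : fpComp (p ^ e) co j (w ^ p ^ e * a) = w * fpComp (p ^ e) co j a :=
      fpComp_semilinear hq hco0 hcoadd hcosemi j w a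
    have h3 : fpComp (p ^ e) co j (w ^ p ^ e * a) = ∑ i, u i * fpComp (p ^ e) co j (fc i) := by
      rw [h1, fpComp_finsetSum _ hco0 hcoadd]
      apply Finset.sum_congr rfl
      intro i _
      rw [mul_comm (fc i), fpComp_semilinear hq hco0 hcoadd hcosemi]
    rw [mul_comm, ← h2, h3]
    exact Ideal.sum_mem _ (fun i _ => Ideal.mul_mem_right _ _ (hu i))
  obtain ⟨s, hs⟩ := fpComp_rep hq hco0 sK hcorep a
  rw [frobeniusPower, hs]
  exact Ideal.sum_mem _ (fun j _ => Ideal.mul_mem_right _ _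
    (Ideal.subset_span ⟨fpComp (p ^ e) co j a, hcomp j, rfl⟩))

end Aux


/-- Let `A = K[x₁, …, xₙ]` be a polynomial ring over a field `K` of prime
characteristic `p`, `W ⊆ A` multiplicatively closed, `J ⊆ A` an ideal and `e ≥ 1`.
If `L₀ = I_e(W⁻¹J ∩ A)` is the smallest ideal of `A` whose `e`-th Frobenius power
contains the contraction `W⁻¹J ∩ A`, then the extension `W⁻¹L₀` is the smallest
ideal `L` of `W⁻¹A` with `W⁻¹J ⊆ L^{[p^e]}`; that is, `I_e(W⁻¹J)` exists and equals
`W⁻¹ I_e(W⁻¹J ∩ A)`. -/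
theorem Ie_localization_of_Ie_contraction (p n : ℕ) (hp : p.Prime)
    (K : Type*) [Field K] [CharP K p]
    (W : Submonoid (MvPolynomial (Fin n) K)) (J : Ideal (MvPolynomial (Fin n) K))
    (e : ℕ) (he : 1 ≤ e) (L₀ : Ideal (MvPolynomial (Fin n) K))
    (h₁ : (J.map (algebraMap (MvPolynomial (Fin n) K) (Localization W))).comap
            (algebraMap (MvPolynomial (Fin n) K) (Localization W)) ≤
          frobeniusPower p e L₀)
    (h₂ : ∀ L : Ideal (MvPolynomial (Fin n) K),
          (J.map (algebraMap (MvPolynomial (Fin n) K) (Localization W))).comap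
              (algebraMap (MvPolynomial (Fin n) K) (Localization W)) ≤
            frobeniusPower p e L → L₀ ≤ L) :
    J.map (algebraMap (MvPolynomial (Fin n) K) (Localization W)) ≤
        frobeniusPower p e
          (L₀.map (algebraMap (MvPolynomial (Fin n) K) (Localization W))) ∧
      ∀ L : Ideal (Localization W),
        J.map (algebraMap (MvPolynomial (Fin n) K) (Localization W)) ≤
          frobeniusPower p e L →
        L₀.map (algebraMap (MvPolynomial (Fin n) K) (Localization W)) ≤ L := by
  classical
  haveI := Fact.mk hp
  set A := MvPolynomial (Fin n) K with hA
  set B := Localization W with hB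
  set f := algebraMap A B with hf
  have hmapfrob : ∀ I : Ideal A, (frobeniusPower p e I).map f ≤ frobeniusPower p e (I.map f) := by
    intro I
    rw [frobeniusPower, Ideal.map_span]
    apply Ideal.span_le.mpr
    rintro z ⟨_, ⟨x, hx, rfl⟩, rfl⟩
    exact Ideal.subset_span ⟨f x, Ideal.mem_map_of_mem f hx, (map_pow f x _).symm⟩
  constructor
  · have hJ : J ≤ frobeniusPower p e L₀ := le_trans Ideal.le_comap_map h₁
    exact le_trans (Ideal.map_mono hJ) (hmapfrob L₀)
  · intro L hL
    rcases subsingleton_or_nontrivial B with hBs | hBn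
    · intro z _
      have hz0 : z = 0 := Subsingleton.elim z 0
      rw [hz0]
      exact L.zero_mem
    · have hW : W ≤ nonZeroDivisors A := by
        intro w hw
        have hu : IsUnit (f w) := IsLocalization.map_units B ⟨w, hw⟩
        have hwne : w ≠ 0 := by
          rintro rfl
          rw [map_zero] at hu
          exact zero_ne_one (isUnit_zero_iff.mp hu)
        exact mem_nonZeroDivisors_of_ne_zero hwne
      have hinj : Function.Injective f := IsLocalization.injective B hW
      rw [Ideal.map_le_iff_le_comap]
      apply h₂
      intro a ha
      rw [Ideal.mem_comap] at ha
      set C := L.comap f with hC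
      have haL : f a ∈ frobeniusPower p e L := hL ha
      have hLle : frobeniusPower p e L ≤ (frobeniusPower p e C).map f := by
        have hLC : L = C.map f := (IsLocalization.map_comap W B L).symm
        rw [hLC, frobeniusPower]
        apply Ideal.span_le.mpr
        rintro z ⟨y, hy, rfl⟩
        rw [SetLike.mem_coe, hf, IsLocalization.mem_map_algebraMap_iff W B] at hy
        obtain ⟨⟨c, s⟩, hcs⟩ := hy
        obtain ⟨v, hv⟩ := IsLocalization.map_units B s
        have hy' : y = f c * ↑v⁻¹ := by
          rw [Units.eq_mul_inv_iff_mul_eq, hv]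
          exact hcs
        have hyq : (fun a => a ^ p ^ e) y = f ((c : A) ^ p ^ e) * (↑v⁻¹ : B) ^ p ^ e := by
          show y ^ p ^ e = _
          rw [hy', mul_pow, map_pow]
        rw [SetLike.mem_coe, hyq]
        apply Ideal.mul_mem_right
        apply Ideal.mem_map_of_mem
        exact Ideal.subset_span ⟨(c : A), c.2, rfl⟩
      have haC : f a ∈ (frobeniusPower p e C).map f := hLle haL
      rw [hf, IsLocalization.mem_map_algebraMap_iff W B] at haC
      obtain ⟨⟨c, s⟩, hcs⟩ := haC
      have has : a * (s : A) ∈ frobeniusPower p e C := by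
        have : a * (s : A) = (c : A) := by
          apply hinj
          rw [map_mul]
          exact hcs
        rw [this]
        exact c.2
      have hsq : (s : A) ^ p ^ e * a ∈ frobeniusPower p e C := by
        have hqe : p ^ e = (p ^ e - 1) + 1 := (Nat.succ_pred_eq_of_pos (pow_pos hp.pos e)).symm
        have heq : (s : A) ^ p ^ e * a = (s : A) ^ (p ^ e - 1) * (a * (s : A)) := by
          conv_lhs => rw [hqe]
          rw [pow_succ]
          ring
        rw [heq]
        exact Ideal.mul_mem_left _ _ has
      have hkey := fp_key e C ((s : A)) a hsq
      have hcol : C.colon (Ideal.span {(s : A)}) ≤ C := by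
        intro x hx
        rw [Ideal.mem_colon_span_singleton] at hx
        rw [hC, Ideal.mem_comap] at hx ⊢
        obtain ⟨v, hv⟩ := IsLocalization.map_units B s
        have hfx : f x = f (x * (s : A)) * ↑v⁻¹ := by
          rw [map_mul, hf, ← hv, mul_assoc, Units.mul_inv, mul_one]
        rw [hfx]
        exact Ideal.mul_mem_right _ _ hx
      exact frobeniusPower_mono p e hcol hkey
end

section
/- Let A = K[x₁,…,xₙ] be a polynomial ring over a field K of prime characteristic p, let W ⊆ A be a multiplicatively closed subset, let J be an ideal of A, and let e ≥ 1. Suppose L₀ is the smallest ideal of A (with respect to inclusion) such that J ⊆ L₀^{[p^e]}, i.e. L₀ = I_e(J). Then the extension W⁻¹L₀ is the smallest ideal L of W⁻¹A such that W⁻¹J ⊆ L^{[p^e]}; in other words, I_e(W⁻¹J) exists and W⁻¹I_e(J) = I_e(W⁻¹J). -/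
open MvPolynomial

noncomputable section FrobeniusAux

/-- `K` viewed as a module over itself via the `e`-th iterated Frobenius. -/
def TwK (K : Type*) (p e : ℕ) : Type _ := K

instance (K : Type*) [Field K] (p e : ℕ) : AddCommGroup (TwK K p e) :=
  inferInstanceAs (AddCommGroup K)

instance (K : Type*) [Field K] (p e : ℕ) [Fact p.Prime] [CharP K p] :
    Module K (TwK K p e) :=
  Module.compHom K (iterateFrobenius K p e)

variable {K : Type*} [Field K] {p e : ℕ} [Fact p.Prime] [CharP K p] {n : ℕ}

def TwK.un (v : TwK K p e) : K := v
def TwK.mk (v : K) : TwK K p e := v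

lemma twK_smul (c : K) (v : TwK K p e) : (c • v).un = c ^ p ^ e * v.un := rfl

variable (K p e) in
/-- index type for a basis of `K` over `K^{p^e}`. -/
def Jty : Type _ := Module.Free.ChooseBasisIndex K (TwK K p e)

variable (K p e) in
def bK : Module.Basis (Jty K p e) K (TwK K p e) := Module.Free.chooseBasis K (TwK K p e)

/-- the `j`-th coordinate of `k : K` w.r.t. the basis of `K` over `K^{p^e}`. -/
def coordK (j : Jty K p e) (k : K) : K := (bK K p e).repr (TwK.mk k) j

lemma coordK_zero (j : Jty K p e) : coordK j (0 : K) = 0 := by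
  have : TwK.mk (0 : K) = (0 : TwK K p e) := rfl
  simp [coordK, this]

lemma coordK_add (j : Jty K p e) (k k' : K) :
    coordK j (k + k') = coordK j k + coordK j k' := by
  have : TwK.mk (k + k') = TwK.mk (K := K) (p := p) (e := e) k + TwK.mk k' := rfl
  simp [coordK, this]

lemma coordK_qpow_mul (j : Jty K p e) (u k : K) :
    coordK j (u ^ p ^ e * k) = u * coordK j k := by
  have : TwK.mk (u ^ p ^ e * k) = u • TwK.mk (K := K) (p := p) (e := e) k := rfl
  simp [coordK, this, Finsupp.smul_apply]

lemma sum_coordK (k : K) :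
    ∑ j ∈ ((bK K p e).repr (TwK.mk k)).support,
      (coordK j k) ^ p ^ e * ((bK K p e) j).un = k := by
  have h := (bK K p e).linearCombination_repr (TwK.mk k)
  rw [Finsupp.linearCombination_apply, Finsupp.sum] at h
  have h2 : (∑ a ∈ ((bK K p e).repr (TwK.mk k)).support,
      ((bK K p e).repr (TwK.mk k)) a • (bK K p e) a).un = k := congrArg TwK.un h
  conv_rhs => rw [← h2]
  rfl


/-- The `(j, β)` coordinate map for the decomposition of `K[x]` over its
`p^e`-th power subring. -/
def DD (j : Jty K p e) (β : Fin n →₀ ℕ) (f : MvPolynomial (Fin n) K) :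
    MvPolynomial (Fin n) K :=
  ∑ γ ∈ f.support.image (fun α => α.mapRange (· / p ^ e) (Nat.zero_div _)),
    monomial γ (coordK j (coeff (p ^ e • γ + β) f))

lemma qpos : 0 < p ^ e := pow_pos (Fact.out (p := p.Prime)).pos e

lemma stretch_apply (γ β : Fin n →₀ ℕ) (i : Fin n) :
    (p ^ e • γ + β) i = p ^ e * γ i + β i := by
  simp [Finsupp.add_apply, Finsupp.smul_apply]

lemma coeff_DD (j : Jty K p e) (β : Fin n →₀ ℕ) (hβ : ∀ i, β i < p ^ e)
    (f : MvPolynomial (Fin n) K) (γ' : Fin n →₀ ℕ) :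
    coeff γ' (DD j β f) = coordK j (coeff (p ^ e • γ' + β) f) := by
  rw [DD]
  rw [MvPolynomial.coeff_sum]
  simp only [coeff_monomial]
  rw [Finset.sum_ite_eq' _ γ' (fun γ => coordK j (coeff (p ^ e • γ + β) f))]
  split_ifs with hmem
  · rfl
  · by_cases hc : coeff (p ^ e • γ' + β) f = 0
    · rw [hc, coordK_zero]
    · exfalso
      apply hmem
      apply Finset.mem_image.2
      refine ⟨p ^ e • γ' + β, MvPolynomial.mem_support_iff.2 hc, ?_⟩
      ext i
      rw [Finsupp.mapRange_apply, stretch_apply, Nat.mul_add_div qpos,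
        Nat.div_eq_of_lt (hβ i), add_zero]

lemma DD_add (j : Jty K p e) (β : Fin n →₀ ℕ) (hβ : ∀ i, β i < p ^ e)
    (f g : MvPolynomial (Fin n) K) :
    DD j β (f + g) = DD j β f + DD j β g := by
  apply MvPolynomial.ext
  intro γ'
  simp [coeff_DD j β hβ, coordK_add]

lemma DD_zero (j : Jty K p e) (β : Fin n →₀ ℕ) (hβ : ∀ i, β i < p ^ e) :
    DD j β (0 : MvPolynomial (Fin n) K) = 0 := by
  apply MvPolynomial.ext
  intro γ'
  simp [coeff_DD j β hβ, coordK_zero]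

lemma DD_sum (j : Jty K p e) (β : Fin n →₀ ℕ) (hβ : ∀ i, β i < p ^ e)
    {ι : Type*} (s : Finset ι) (f : ι → MvPolynomial (Fin n) K) :
    DD j β (∑ i ∈ s, f i) = ∑ i ∈ s, DD j β (f i) := by
  classical
  induction s using Finset.induction_on with
  | empty => simpa using DD_zero j β hβ
  | insert x s hx ih =>
      rw [Finset.sum_insert hx, Finset.sum_insert hx, DD_add j β hβ, ih]

lemma exists_decomp_exponent (α : Fin n →₀ ℕ) :
    ∃ γ β : Fin n →₀ ℕ, (∀ i, β i < p ^ e) ∧ α = p ^ e • γ + β := by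
  refine ⟨α.mapRange (· / p ^ e) (Nat.zero_div _),
    α.mapRange (· % p ^ e) (Nat.zero_mod _), fun i => ?_, ?_⟩
  · exact Nat.mod_lt _ (qpos (p := p) (e := e))
  · ext i
    rw [stretch_apply]
    simp only [Finsupp.mapRange_apply]
    rw [Nat.div_add_mod]

lemma stretch_inj {γ γ' β β' : Fin n →₀ ℕ} (hβ : ∀ i, β i < p ^ e)
    (hβ' : ∀ i, β' i < p ^ e) (h : p ^ e • γ + β = p ^ e • γ' + β') :
    γ = γ' ∧ β = β' := by
  have key : ∀ i : Fin n, γ i = γ' i ∧ β i = β' i := by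
    intro i
    have hi := congrArg (fun (v : Fin n →₀ ℕ) => v i) h
    simp only [stretch_apply] at hi
    have hmod : β i = β' i := by
      have h1 := congrArg (· % p ^ e) hi
      simpa [Nat.mul_add_mod, Nat.mod_eq_of_lt (hβ i), Nat.mod_eq_of_lt (hβ' i)] using h1
    refine ⟨?_, hmod⟩
    rw [hmod] at hi
    exact Nat.eq_of_mul_eq_mul_left qpos (Nat.add_right_cancel hi)
  exact ⟨Finsupp.ext fun i => (key i).1, Finsupp.ext fun i => (key i).2⟩

lemma DD_monomial_same (j : Jty K p e) (β γ₀ : Fin n →₀ ℕ) (hβ : ∀ i, β i < p ^ e)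
    (k : K) :
    DD j β (monomial (p ^ e • γ₀ + β) k) = monomial γ₀ (coordK j k) := by
  apply MvPolynomial.ext
  intro γ'
  rw [coeff_DD j β hβ, coeff_monomial, coeff_monomial]
  split_ifs with h1 h2 h2
  · rfl
  · exact absurd ((stretch_inj hβ hβ h1).1) h2
  · exact absurd (by rw [h2]) h1
  · exact coordK_zero j

lemma DD_monomial_ne (j : Jty K p e) (β β₀ γ₀ : Fin n →₀ ℕ) (hβ : ∀ i, β i < p ^ e)
    (hβ₀ : ∀ i, β₀ i < p ^ e) (hne : β ≠ β₀) (k : K) :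
    DD j β (monomial (p ^ e • γ₀ + β₀) k) = 0 := by
  apply MvPolynomial.ext
  intro γ'
  rw [coeff_DD j β hβ, coeff_monomial]
  rw [if_neg fun h => hne ((stretch_inj hβ₀ hβ h).2).symm, coordK_zero, coeff_zero]


lemma DD_qpow_mul (j : Jty K p e) (β : Fin n →₀ ℕ) (hβ : ∀ i, β i < p ^ e)
    (c f : MvPolynomial (Fin n) K) :
    DD j β (c ^ p ^ e * f) = c * DD j β f := by
  induction c using MvPolynomial.induction_on' generalizing f with
  | monomial u a =>
      induction f using MvPolynomial.induction_on' with
      | monomial α k =>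
          obtain ⟨γ₀, β₀, hβ₀, rfl⟩ := exists_decomp_exponent (p := p) (e := e) α
          rw [monomial_pow, monomial_mul]
          have hexp : p ^ e • u + (p ^ e • γ₀ + β₀) = p ^ e • (u + γ₀) + β₀ := by
            rw [smul_add, add_assoc]
          rw [hexp]
          by_cases hb : β = β₀
          · subst hb
            rw [DD_monomial_same j β _ hβ k, DD_monomial_same j β _ hβ, monomial_mul,
              coordK_qpow_mul]
          · rw [DD_monomial_ne j β β₀ _ hβ hβ₀ hb, DD_monomial_ne j β β₀ _ hβ hβ₀ hb,
              mul_zero]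
      | add f₁ f₂ ih1 ih2 =>
          rw [mul_add, DD_add j β hβ, DD_add j β hβ, ih1, ih2, mul_add]
  | add c₁ c₂ ih1 ih2 =>
      rw [add_pow_char_pow, add_mul, DD_add j β hβ, ih1 f, ih2 f, add_mul]

/-- exponents bounded by `p^e`. -/
abbrev Tlt (p e n : ℕ) : Type := {β : Fin n →₀ ℕ // ∀ i, β i < p ^ e}

/-- Every polynomial is the sum of `p^e`-th powers of its coordinates times
the corresponding basis elements. -/
lemma exists_decomp (f : MvPolynomial (Fin n) K) :
    ∃ s : Finset (Jty K p e × Tlt p e n),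
      (∀ i : Jty K p e × Tlt p e n, i ∉ s → DD i.1 i.2.val f = 0) ∧
      f = ∑ i ∈ s, (DD i.1 i.2.val f) ^ p ^ e *
            monomial i.2.val ((bK K p e) i.1).un := by
  classical
  induction f using MvPolynomial.induction_on' with
  | monomial α k =>
      obtain ⟨γ₀, β₀, hβ₀, rfl⟩ := exists_decomp_exponent (p := p) (e := e) α
      refine ⟨((bK K p e).repr (TwK.mk k)).support ×ˢ {(⟨β₀, hβ₀⟩ : Tlt p e n)},
        ?_, ?_⟩
      · rintro ⟨j, β⟩ hi
        rw [Finset.mem_product, Finset.mem_singleton] at hi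
        push_neg at hi
        by_cases hb : β = (⟨β₀, hβ₀⟩ : Tlt p e n)
        · subst hb
          have hj : j ∉ ((bK K p e).repr (TwK.mk k)).support := fun h => hi h rfl
          rw [DD_monomial_same j β₀ γ₀ hβ₀ k]
          have : coordK (p := p) (e := e) j k = 0 := Finsupp.notMem_support_iff.1 hj
          rw [this, monomial_zero]
        · have hbv : β.val ≠ β₀ := fun h => hb (Subtype.ext h)
          exact DD_monomial_ne j β.val β₀ γ₀ β.property hβ₀ hbv k
      · rw [Finset.sum_product]
        simp only [Finset.sum_singleton]
        have hterm : ∀ j ∈ ((bK K p e).repr (TwK.mk k)).support,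
            (DD j β₀ (monomial (p ^ e • γ₀ + β₀) k)) ^ p ^ e *
              monomial β₀ ((bK K p e) j).un
            = monomial (p ^ e • γ₀ + β₀) ((coordK j k) ^ p ^ e * ((bK K p e) j).un) := by
          intro j _
          rw [DD_monomial_same j β₀ γ₀ hβ₀ k, monomial_pow, monomial_mul]
        rw [Finset.sum_congr rfl hterm, ← map_sum (monomial (p ^ e • γ₀ + β₀)), sum_coordK]
  | add f₁ f₂ ih1 ih2 =>
      obtain ⟨s₁, hz1, hd1⟩ := ih1
      obtain ⟨s₂, hz2, hd2⟩ := ih2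
      refine ⟨s₁ ∪ s₂, ?_, ?_⟩
      · intro i hi
        rw [Finset.mem_union] at hi
        push_neg at hi
        rw [DD_add i.1 i.2.val i.2.property, hz1 i hi.1, hz2 i hi.2, add_zero]
      · have hrw : ∀ i : Jty K p e × Tlt p e n, i ∈ s₁ ∪ s₂ →
            (DD i.1 i.2.val (f₁ + f₂)) ^ p ^ e * monomial i.2.val ((bK K p e) i.1).un
            = (DD i.1 i.2.val f₁) ^ p ^ e * monomial i.2.val ((bK K p e) i.1).un
              + (DD i.1 i.2.val f₂) ^ p ^ e * monomial i.2.val ((bK K p e) i.1).un := by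
          intro i _
          rw [DD_add i.1 i.2.val i.2.property, add_pow_char_pow, add_mul]
        rw [Finset.sum_congr rfl hrw, Finset.sum_add_distrib]
        congr 1
        · rw [← Finset.sum_subset Finset.subset_union_left]
          · exact hd1
          · intro i _ hi
            rw [hz1 i hi, zero_pow (qpos (p := p) (e := e)).ne', zero_mul]
        · rw [← Finset.sum_subset Finset.subset_union_right]
          · exact hd2
          · intro i _ hi
            rw [hz2 i hi, zero_pow (qpos (p := p) (e := e)).ne', zero_mul]


lemma DD_mem_of_mem_fp {M : Ideal (MvPolynomial (Fin n) K)} {y : MvPolynomial (Fin n) K}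
    (hy : y ∈ frobeniusPower p e M) (j : Jty K p e) (β : Tlt p e n) :
    DD j β.val y ∈ M := by
  revert j β
  refine Submodule.span_induction
    (p := fun y _ => ∀ (j : Jty K p e) (β : Tlt p e n), DD j β.val y ∈ M)
    ?_ ?_ ?_ ?_ hy
  · rintro x ⟨m, hm, rfl⟩ j β
    rw [show (fun a => a ^ p ^ e) m = m ^ p ^ e * 1 from (mul_one _).symm,
      DD_qpow_mul j β.val β.property]
    exact Ideal.mul_mem_right _ M hm
  · intro j β
    rw [DD_zero j β.val β.property]
    exact M.zero_mem
  · intro x y _ _ ihx ihy j β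
    rw [DD_add j β.val β.property]
    exact M.add_mem (ihx j β) (ihy j β)
  · intro r x _ ih j β
    rw [smul_eq_mul]
    obtain ⟨s, hz, hd⟩ := exists_decomp (p := p) (e := e) x
    have hrx : r * x = ∑ i ∈ s, (DD i.1 i.2.val x) ^ p ^ e *
        (r * monomial i.2.val ((bK K p e) i.1).un) := by
      conv_lhs => rw [hd]
      rw [Finset.mul_sum]
      exact Finset.sum_congr rfl fun i _ => by ring
    rw [hrx, DD_sum j β.val β.property]
    refine Submodule.sum_mem M fun i hi => ?_
    rw [DD_qpow_mul j β.val β.property]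
    exact Ideal.mul_mem_right _ M (ih i.1 i.2)

lemma mem_fp_colon {M : Ideal (MvPolynomial (Fin n) K)} {a x : MvPolynomial (Fin n) K}
    (h : a ^ p ^ e * x ∈ frobeniusPower p e M) :
    x ∈ frobeniusPower p e (M.colon (Ideal.span {a})) := by
  obtain ⟨s, hz, hd⟩ := exists_decomp (p := p) (e := e) x
  have hcol : ∀ (j : Jty K p e) (β : Tlt p e n),
      DD j β.val x ∈ M.colon (Ideal.span {a}) := by
    intro j β
    rw [Ideal.mem_colon_span_singleton, mul_comm, ← DD_qpow_mul j β.val β.property]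
    exact DD_mem_of_mem_fp h j β
  conv_rhs => rw [hd]
  refine Submodule.sum_mem _ fun i hi => ?_
  refine Ideal.mul_mem_right _ _ (Ideal.subset_span ?_)
  exact ⟨DD i.1 i.2.val x, hcol i.1 i.2, rfl⟩

end FrobeniusAux

lemma map_fp_le {R S : Type*} [CommRing R] [CommRing S] (f : R →+* S) (p e : ℕ)
    (I : Ideal R) :
    (frobeniusPower p e I).map f ≤ frobeniusPower p e (I.map f) := by
  rw [frobeniusPower, Ideal.map_span]
  refine Ideal.span_le.2 ?_
  rintro y ⟨x, ⟨a, ha, rfl⟩, rfl⟩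
  exact Ideal.subset_span ⟨f a, Ideal.mem_map_of_mem f ha, (map_pow f a _).symm⟩

/-- Let `A = K[x₁, …, xₙ]` be a polynomial ring over a field `K` of prime
characteristic `p`, `W ⊆ A` multiplicatively closed, `J ⊆ A` an ideal and `e ≥ 1`.
If `L₀ = I_e(J)` is the smallest ideal of `A` whose `e`-th Frobenius power contains
`J`, then the extension `W⁻¹L₀` is the smallest ideal `L` of `W⁻¹A` with
`W⁻¹J ⊆ L^{[p^e]}`; that is, `I_e(W⁻¹J)` exists and `W⁻¹I_e(J) = I_e(W⁻¹J)`. -/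
theorem Ie_commutes_with_localization (p n : ℕ) (hp : p.Prime)
    (K : Type*) [Field K] [CharP K p]
    (W : Submonoid (MvPolynomial (Fin n) K)) (J : Ideal (MvPolynomial (Fin n) K))
    (e : ℕ) (he : 1 ≤ e) (L₀ : Ideal (MvPolynomial (Fin n) K))
    (h₁ : J ≤ frobeniusPower p e L₀)
    (h₂ : ∀ L : Ideal (MvPolynomial (Fin n) K), J ≤ frobeniusPower p e L → L₀ ≤ L) :
    J.map (algebraMap (MvPolynomial (Fin n) K) (Localization W)) ≤
        frobeniusPower p e
          (L₀.map (algebraMap (MvPolynomial (Fin n) K) (Localization W))) ∧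
      ∀ L : Ideal (Localization W),
        J.map (algebraMap (MvPolynomial (Fin n) K) (Localization W)) ≤
          frobeniusPower p e L →
        L₀.map (algebraMap (MvPolynomial (Fin n) K) (Localization W)) ≤ L := by
  haveI : Fact p.Prime := ⟨hp⟩
  constructor
  · exact le_trans (Ideal.map_mono h₁) (map_fp_le _ p e L₀)
  · intro L hL
    rcases subsingleton_or_nontrivial (Localization W) with hsub | hnontriv
    · intro x _
      exact (Subsingleton.elim (0 : Localization W) x) ▸ L.zero_mem
    · haveI : CharP (Localization W) p := by
        refine (CharP.charP_iff_prime_eq_zero hp).2 ?_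
        rw [← map_natCast (algebraMap (MvPolynomial (Fin n) K) (Localization W)) p,
          CharP.cast_eq_zero, map_zero]
      have h0W : (0 : MvPolynomial (Fin n) K) ∉ W := by
        intro h0
        exact (not_subsingleton (Localization W))
          (IsLocalization.subsingleton (M := W) (S := Localization W) h0)
      have hWle : W ≤ nonZeroDivisors (MvPolynomial (Fin n) K) := fun w hw =>
        mem_nonZeroDivisors_of_ne_zero (fun h => h0W (h ▸ hw))
      have hfinj : Function.Injective
          (algebraMap (MvPolynomial (Fin n) K) (Localization W)) :=
        IsLocalization.injective _ hWle
      set M := L.comap (algebraMap (MvPolynomial (Fin n) K) (Localization W)) with hMdef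
      have hLM : M.map (algebraMap (MvPolynomial (Fin n) K) (Localization W)) = L :=
        IsLocalization.map_comap W _ L
      -- `fp L ≤ map f (fp M)`
      have hfp : frobeniusPower p e L ≤
          (frobeniusPower p e M).map (algebraMap (MvPolynomial (Fin n) K)
            (Localization W)) := by
        have hpow : ∀ x ∈ M.map (algebraMap (MvPolynomial (Fin n) K) (Localization W)),
            x ^ p ^ e ∈ (frobeniusPower p e M).map
              (algebraMap (MvPolynomial (Fin n) K) (Localization W)) := by
          intro x hx
          rw [← Ideal.span_eq M, Ideal.map_span] at hx
          refine Submodule.span_induction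
            (p := fun x _ => x ^ p ^ e ∈ (frobeniusPower p e M).map
              (algebraMap (MvPolynomial (Fin n) K) (Localization W)))
            ?_ ?_ ?_ ?_ hx
          · rintro y ⟨a, ha, rfl⟩
            rw [← map_pow]
            exact Ideal.mem_map_of_mem _ (Ideal.subset_span ⟨a, ha, rfl⟩)
          · rw [zero_pow (pow_pos hp.pos e).ne']
            exact Submodule.zero_mem _
          · intro y z _ _ ihy ihz
            rw [add_pow_char_pow]
            exact Submodule.add_mem _ ihy ihz
          · intro r y _ ihy
            rw [smul_eq_mul, mul_pow]
            exact Ideal.mul_mem_left _ _ ihy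
        rw [← hLM, frobeniusPower, Ideal.span_le]
        rintro y ⟨x, hx, rfl⟩
        exact hpow x hx
      obtain ⟨G, hG⟩ : J.FG := IsNoetherian.noetherian J
      have key : ∀ g ∈ G, ∃ w : W, (w : MvPolynomial (Fin n) K) * g ∈
          frobeniusPower p e M := by
        intro g hg
        have hgJ : g ∈ J := hG ▸ Ideal.subset_span hg
        have hmem : algebraMap (MvPolynomial (Fin n) K) (Localization W) g ∈
            (frobeniusPower p e M).map (algebraMap (MvPolynomial (Fin n) K)
              (Localization W)) :=
          hfp (hL (Ideal.mem_map_of_mem _ hgJ))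
        rw [IsLocalization.mem_map_algebraMap_iff W] at hmem
        obtain ⟨⟨m, w⟩, hmw⟩ := hmem
        refine ⟨w, ?_⟩
        have heq : algebraMap (MvPolynomial (Fin n) K) (Localization W)
            ((w : MvPolynomial (Fin n) K) * g) =
            algebraMap (MvPolynomial (Fin n) K) (Localization W) (m : _) := by
          rw [map_mul, mul_comm]
          exact hmw
        exact (hfinj heq) ▸ m.2
      choose wfun hwfun using key
      classical
      set w : W := ∏ x ∈ G.attach, wfun x.1 x.2 with hwdef
      have hwg : ∀ g (hg : g ∈ G), (w : MvPolynomial (Fin n) K) * g ∈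
          frobeniusPower p e M := by
        intro g hg
        have hdvd : ((wfun g hg : MvPolynomial (Fin n) K)) ∣
            (w : MvPolynomial (Fin n) K) := by
          rw [hwdef, Submonoid.coe_finset_prod]
          exact Finset.dvd_prod_of_mem _ (Finset.mem_attach G ⟨g, hg⟩)
        obtain ⟨c, hc⟩ := hdvd
        rw [hc, mul_comm (wfun g hg : MvPolynomial (Fin n) K) c, mul_assoc]
        exact Ideal.mul_mem_left _ _ (hwfun g hg)
      have hwq : ∀ g (hg : g ∈ G), (w : MvPolynomial (Fin n) K) ^ p ^ e * g ∈
          frobeniusPower p e M := by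
        intro g hg
        have : (w : MvPolynomial (Fin n) K) ^ p ^ e * g =
            (w : MvPolynomial (Fin n) K) ^ (p ^ e - 1) *
              ((w : MvPolynomial (Fin n) K) * g) := by
          rw [← mul_assoc, ← pow_succ, Nat.sub_add_cancel (pow_pos hp.pos e)]
        rw [this]
        exact Ideal.mul_mem_left _ _ (hwg g hg)
      set N : Ideal (MvPolynomial (Fin n) K) :=
        M.colon (Ideal.span {(w : MvPolynomial (Fin n) K)}) with hNdef
      have hJN : J ≤ frobeniusPower p e N := by
        rw [← hG, Ideal.span_le]
        intro g hg
        exact mem_fp_colon (hwq g hg)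
      have hNL : N.map (algebraMap (MvPolynomial (Fin n) K) (Localization W)) ≤ L := by
        rw [Ideal.map_le_iff_le_comap]
        intro y hy
        have hwy : (w : MvPolynomial (Fin n) K) * y ∈ M :=
          Ideal.mem_colon_span_singleton.1 hy |> fun h => (mul_comm y _ ▸ h)
        have : algebraMap (MvPolynomial (Fin n) K) (Localization W)
            ((w : MvPolynomial (Fin n) K) * y) ∈ L := by
          rw [← hLM]
          exact Ideal.mem_map_of_mem _ hwy
        rw [map_mul] at this
        rw [Ideal.mem_comap]
        exact (Ideal.unit_mul_mem_iff_mem L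
          (IsLocalization.map_units (Localization W) w)).1 this
      exact le_trans (Ideal.map_mono (h₂ N hJN)) hNL
end

section
/- Let A be a commutative ring and M an A-module generated by elements g₁, …, g_s. Let φ : A^s → M be the A-linear map sending the j-th standard basis vector e_j to g_j (so φ is surjective), and let J be an s × t matrix with entries in A such that the image of the induced A-linear map A^t → A^s, v ↦ J·v, equals ker φ. Fix i ∈ {1, …, s} and let J_i denote the (s−1) × t matrix obtained from J by deleting the i-th row. Then M is generated by g_i alone (A·g_i = M) if and only if the A-linear map A^t → A^{s−1} induced by J_i is surjective (its image is all of A^{s−1}). -/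
/-- Let `M` be an `A`-module generated by `g₁, …, g_s`, let `φ : Aˢ → M` send the
`j`-th standard basis vector to `g_j`, and let `J` be an `s × t` matrix over `A`
whose column space (the image of `v ↦ J·v`) equals `ker φ`. For a fixed `i`, let
`J_i` be the matrix obtained from `J` by deleting the `i`-th row. Then `M` is
generated by `g_i` alone if and only if the map `Aᵗ → A^{s-1}` induced by `J_i`
is surjective. -/
theorem span_singleton_generator_iff_deleted_row_surjective
    (A : Type*) [CommRing A] (M : Type*) [AddCommGroup M] [Module A M]
    (s t : ℕ) (g : Fin s → M)
    (φ : (Fin s → A) →ₗ[A] M) (hφ : ∀ j : Fin s, φ (Pi.single j 1) = g j)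
    (hsurj : Function.Surjective φ)
    (J : Matrix (Fin s) (Fin t) A)
    (hJ : LinearMap.range J.mulVecLin = LinearMap.ker φ)
    (i : Fin s) :
    Submodule.span A {g i} = (⊤ : Submodule A M) ↔
      Function.Surjective
        (Matrix.mulVecLin
          (J.submatrix (fun j : {j : Fin s // j ≠ i} => (j : Fin s)) id)) := by
  have hφx : ∀ x : Fin s → A, φ x = ∑ j, x j • g j := by
    intro x
    rw [LinearMap.pi_apply_eq_sum_univ]
    refine Finset.sum_congr rfl fun j _ => ?_
    congr 1
    rw [← hφ j]
    congr 1
    funext l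
    simp [Pi.single_apply, eq_comm]
  have hsub : ∀ (v : Fin t → A) (j : {j : Fin s // j ≠ i}),
      (J.submatrix (fun j : {j : Fin s // j ≠ i} => (j : Fin s)) id).mulVecLin v j
        = J.mulVecLin v (j : Fin s) := by
    intro v j
    simp [Matrix.mulVecLin, Matrix.mulVec, Matrix.submatrix_apply, dotProduct]
  constructor
  · intro hspan w
    set x : Fin s → A := fun k => if h : k = i then 0 else w ⟨k, h⟩ with hx
    have hmem : φ x ∈ Submodule.span A {g i} := hspan ▸ Submodule.mem_top
    obtain ⟨a, ha⟩ := Submodule.mem_span_singleton.mp hmem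
    have hker : x - a • (Pi.single i 1 : Fin s → A) ∈ LinearMap.ker φ := by
      rw [LinearMap.mem_ker, map_sub, map_smul, hφ, ← ha, sub_self]
    rw [← hJ] at hker
    obtain ⟨v, hv⟩ := hker
    refine ⟨v, ?_⟩
    funext j
    have hj : J.mulVecLin v (j : Fin s) = (x - a • (Pi.single i 1 : Fin s → A)) (j : Fin s) := by
      rw [hv]
    rw [hsub v j, hj]
    have hji : (j : Fin s) ≠ i := j.2
    simp [hx, hji, Pi.single_apply]
  · intro hsurj'
    rw [eq_top_iff]
    intro m _
    obtain ⟨x, rfl⟩ := hsurj m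
    rw [hφx]
    refine Submodule.sum_mem _ fun k _ => Submodule.smul_mem _ _ ?_
    by_cases hk : k = i
    · subst hk; exact Submodule.mem_span_singleton_self _
    · obtain ⟨v, hv⟩ := hsurj' (Pi.single (⟨k, hk⟩ : {j : Fin s // j ≠ i}) 1)
      have hker : φ (J.mulVecLin v) = 0 := by
        have : J.mulVecLin v ∈ LinearMap.ker φ := hJ ▸ ⟨v, rfl⟩
        exact this
      rw [hφx] at hker
      have hval : ∀ j : Fin s, j ≠ i → J.mulVecLin v j = if j = k then 1 else 0 := by
        intro j hj
        have := congrFun hv ⟨j, hj⟩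
        rw [hsub v ⟨j, hj⟩] at this
        rw [this, Pi.single_apply]
        simp [Subtype.ext_iff]
      have hsum : ∑ j, J.mulVecLin v j • g j
          = J.mulVecLin v i • g i + J.mulVecLin v k • g k := by
        refine Fintype.sum_eq_add i k (Ne.symm hk) ?_
        intro j hj
        rw [hval j hj.1]
        simp [hj.2]
      rw [hsum, hval k hk, if_pos rfl, one_smul] at hker
      rw [← neg_eq_of_add_eq_zero_right hker]
      exact Submodule.neg_mem _ (Submodule.smul_mem _ _ (Submodule.mem_span_singleton_self _))
end

section
/- Let A be a commutative ring and M an A-module generated by elements g₁, …, g_s. Let φ : A^s → M be the A-linear map sending the j-th standard basis vector e_j to g_j, and let J be an s × t matrix with entries in A such that the image of the induced map A^t → A^s equals ker φ. Fix i ∈ {1, …, s}, let J_i denote the (s−1) × t matrix obtained from J by deleting the i-th row, and let W ⊆ A be any multiplicatively closed subset. Then the localized module W⁻¹M is generated over W⁻¹A by the single element g_i/1 if and only if the (W⁻¹A)-linear map (W⁻¹A)^t → (W⁻¹A)^{s−1} induced by the matrix J_i (with entries viewed in W⁻¹A) is surjective. -/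
open Matrix


/-- Let `M` be an `A`-module generated by `g₁, …, g_s`, let `φ : Aˢ → M` send the
`j`-th standard basis vector to `g_j`, and let `J` be an `s × t` matrix over `A`
whose column space equals `ker φ`. Fix `i` and let `J_i` be `J` with the `i`-th row
deleted, and let `W ⊆ A` be multiplicatively closed. Then `W⁻¹M` is generated over
`W⁻¹A` by the single element `g_i/1` if and only if the `(W⁻¹A)`-linear map
`(W⁻¹A)ᵗ → (W⁻¹A)^{s-1}` induced by `J_i` (entries viewed in `W⁻¹A`) is
surjective. -/
theorem localized_span_singleton_generator_iff_deleted_row_surjective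
    (A : Type*) [CommRing A] (M : Type*) [AddCommGroup M] [Module A M]
    (s t : ℕ) (g : Fin s → M)
    (φ : (Fin s → A) →ₗ[A] M) (hφ : ∀ j : Fin s, φ (Pi.single j 1) = g j)
    (hsurj : Function.Surjective φ)
    (J : Matrix (Fin s) (Fin t) A)
    (hJ : LinearMap.range J.mulVecLin = LinearMap.ker φ)
    (i : Fin s) (W : Submonoid A) :
    Submodule.span (Localization W) {LocalizedModule.mkLinearMap W M (g i)} =
        (⊤ : Submodule (Localization W) (LocalizedModule W M)) ↔
      Function.Surjective
        (Matrix.mulVecLin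
          ((J.submatrix (fun j : {j : Fin s // j ≠ i} => (j : Fin s)) id).map
            (algebraMap A (Localization W)))) := by
  classical
  set L := Localization W with hL
  set B : Matrix {j : Fin s // j ≠ i} (Fin t) A :=
    J.submatrix (fun j : {j : Fin s // j ≠ i} => (j : Fin s)) id with hB
  set Bm := B.map (algebraMap A L) with hBm
  have hφ' : ∀ (k : Fin s) (c : A), φ (Pi.single k c) = c • g k := by
    intro k c
    have h1 : (Pi.single k c : Fin s → A) = c • (Pi.single k 1 : Fin s → A) := by
      rw [← Pi.single_smul, smul_eq_mul, mul_one]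
    rw [h1, LinearMap.map_smul, hφ]
  have hBJ : ∀ (v : Fin t → A) (r : {j : Fin s // j ≠ i}),
      (B *ᵥ v) r = (J *ᵥ v) (r : Fin s) := by
    intro v r
    simp [hB, Matrix.mulVec, Matrix.submatrix_apply]
  have hmapB : ∀ (v : Fin t → A) (r : {j : Fin s // j ≠ i}),
      (Bm *ᵥ ((algebraMap A L) ∘ v)) r = algebraMap A L ((B *ᵥ v) r) := by
    intro v r
    rw [hBm, ← RingHom.map_mulVec]
  constructor
  · intro hspan
    rw [← LinearMap.range_eq_top, eq_top_iff]
    rintro x -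
    rw [← Finset.univ_sum_single x]
    refine Submodule.sum_mem _ fun j _ => ?_
    suffices hsingle : Pi.single j (1 : L) ∈ LinearMap.range Bm.mulVecLin by
      have h2 := Submodule.smul_mem _ (x j) hsingle
      rwa [← Pi.single_smul, smul_eq_mul, mul_one] at h2
    have hmem : LocalizedModule.mkLinearMap W M (g j.1) ∈
        Submodule.span L {LocalizedModule.mkLinearMap W M (g i)} := by
      rw [hspan]; trivial
    obtain ⟨c, hc⟩ := Submodule.mem_span_singleton.1 hmem
    obtain ⟨⟨a, σ⟩, rfl⟩ := IsLocalization.mk'_surjective W c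
    rw [← Localization.mk_eq_mk'] at hc
    simp only [LocalizedModule.mkLinearMap_apply] at hc
    rw [LocalizedModule.mk_smul_mk, LocalizedModule.mk_eq] at hc
    obtain ⟨u, hu⟩ := hc
    simp only [one_smul, mul_one, Submonoid.smul_def, smul_smul] at hu
    have hrel : ((u : A) * a) • g i = ((u : A) * (σ : A)) • g (j : Fin s) := hu
    set x0 : Fin s → A :=
      Pi.single (j : Fin s) ((u : A) * (σ : A)) - Pi.single i ((u : A) * a) with hx0
    have hker : x0 ∈ LinearMap.ker φ := by
      rw [LinearMap.mem_ker, hx0, map_sub, hφ', hφ', hrel, sub_self]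
    rw [← hJ] at hker
    obtain ⟨v, hv⟩ := hker
    rw [Matrix.mulVecLin_apply] at hv
    have hkey : Bm.mulVecLin ((algebraMap A L) ∘ v)
        = Pi.single j (algebraMap A L ((u : A) * (σ : A))) := by
      funext r
      rw [Matrix.mulVecLin_apply, hmapB, hBJ, hv]
      by_cases hrj : r = j
      · subst hrj
        rw [hx0, Pi.sub_apply, Pi.single_eq_same, Pi.single_eq_of_ne r.2, sub_zero,
          Pi.single_eq_same]
      · have hrj' : (r : Fin s) ≠ (j : Fin s) := fun h => hrj (Subtype.ext h)
        rw [hx0, Pi.sub_apply, Pi.single_eq_of_ne hrj', Pi.single_eq_of_ne r.2, sub_zero,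
          map_zero, Pi.single_eq_of_ne hrj]
    have hunit : IsUnit (algebraMap A L ((u : A) * (σ : A))) :=
      IsLocalization.map_units L (⟨(u : A) * (σ : A), mul_mem u.2 σ.2⟩ : W)
    obtain ⟨ν, hν⟩ := hunit
    have h3 : Pi.single j (algebraMap A L ((u : A) * (σ : A))) ∈
        LinearMap.range Bm.mulVecLin := ⟨(algebraMap A L) ∘ v, hkey⟩
    have h4 := Submodule.smul_mem (LinearMap.range Bm.mulVecLin) (↑ν⁻¹ : L) h3
    rwa [← Pi.single_smul, smul_eq_mul, ← hν, Units.inv_mul] at h4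
  · intro hsB
    have key : ∀ j : Fin s, LocalizedModule.mk (g j) 1 ∈
        Submodule.span L {LocalizedModule.mkLinearMap W M (g i)} := by
      intro j
      by_cases hj : j = i
      · subst hj
        rw [show LocalizedModule.mk (g j) 1 = LocalizedModule.mkLinearMap W M (g j) from rfl]
        exact Submodule.mem_span_singleton_self _
      · obtain ⟨v, hv⟩ := hsB (Pi.single ⟨j, hj⟩ (1 : L))
        rw [Matrix.mulVecLin_apply] at hv
        obtain ⟨b, hb⟩ := IsLocalization.exist_integer_multiples_of_finite W v
        choose w hw using hb
        have hw' : (algebraMap A L) ∘ w = (↑b : A) • v := by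
          funext k; exact hw k
        set y : {j' : Fin s // j' ≠ i} → A := Pi.single ⟨j, hj⟩ ((b : A)) with hy
        -- componentwise equality in L
        have hcomp : ∀ r : {j' : Fin s // j' ≠ i},
            algebraMap A L ((B *ᵥ w) r) = algebraMap A L (y r) := by
          intro r
          rw [← hmapB, hw', Matrix.mulVec_smul, hv, ← Pi.single_smul]
          by_cases hr : r = ⟨j, hj⟩
          · subst hr
            rw [Pi.single_eq_same, hy, Pi.single_eq_same, Algebra.smul_def, mul_one]
          · rw [Pi.single_eq_of_ne hr, hy, Pi.single_eq_of_ne hr, map_zero]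
        have hex : ∀ r : {j' : Fin s // j' ≠ i}, ∃ c : W,
            (↑c : A) * ((B *ᵥ w) r) = ↑c * (y r) :=
          fun r => (IsLocalization.eq_iff_exists W L).1 (hcomp r)
        choose cc hcc using hex
        set u : A := ∏ r : {j' : Fin s // j' ≠ i}, (cc r : A) with hudef
        have hu : u ∈ W := Submonoid.prod_mem _ fun r _ => (cc r).2
        have hcomp' : ∀ r : {j' : Fin s // j' ≠ i},
            u * ((B *ᵥ w) r) = u * (y r) := by
          intro r
          have h5 : (∏ r' ∈ Finset.univ.erase r, (cc r' : A)) * (cc r : A) = u := by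
            rw [hudef, Finset.prod_erase_mul _ _ (Finset.mem_univ r)]
          rw [← h5, mul_assoc, mul_assoc, hcc r]
        set x0 : Fin s → A := J *ᵥ (u • w) with hx0
        have hker : x0 ∈ LinearMap.ker φ := by
          rw [← hJ]; exact ⟨u • w, by rw [Matrix.mulVecLin_apply, hx0]⟩
        set a : A := x0 i with ha
        have hx0eq : x0 = Pi.single j (u * (↑b : A)) + Pi.single i a := by
          funext r
          by_cases hri : r = i
          · subst hri
            rw [Pi.add_apply, Pi.single_eq_of_ne (Ne.symm hj), Pi.single_eq_same, zero_add]
          · have h6 : x0 r = u * ((B *ᵥ w) ⟨r, hri⟩) := by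
              rw [hx0, Matrix.mulVec_smul, Pi.smul_apply, smul_eq_mul, hBJ]
            rw [h6, hcomp' ⟨r, hri⟩, Pi.add_apply, Pi.single_eq_of_ne hri]
            by_cases hrj : r = j
            · subst hrj
              simp [hy, show (⟨r, hri⟩ : {j' : Fin s // j' ≠ i}) = ⟨r, hj⟩ from rfl]
            · have : (⟨r, hri⟩ : {j' : Fin s // j' ≠ i}) ≠ ⟨j, hj⟩ := fun h =>
                hrj (congrArg Subtype.val h)
              simp [hy, Pi.single_eq_of_ne this, Pi.single_eq_of_ne hrj]
        have hφ0 : (u * ↑b) • g j + a • g i = 0 := by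
          have := hker
          rw [LinearMap.mem_ker, hx0eq, map_add, hφ', hφ'] at this
          exact this
        refine Submodule.mem_span_singleton.2 ⟨Localization.mk (-a) ⟨u * ↑b, mul_mem hu b.2⟩, ?_⟩
        rw [LocalizedModule.mkLinearMap_apply, LocalizedModule.mk_smul_mk,
          LocalizedModule.mk_eq]
        refine ⟨1, ?_⟩
        simp only [one_smul, mul_one, Submonoid.smul_def, Submonoid.mk_smul]
        rw [neg_smul, neg_eq_iff_add_eq_zero, add_comm]
        exact hφ0
    rw [eq_top_iff]
    rintro z -
    induction z using LocalizedModule.induction_on with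
    | h m σ =>
      have hsm : LocalizedModule.mk m σ =
          Localization.mk 1 σ • LocalizedModule.mk m 1 := by
        rw [LocalizedModule.mk_smul_mk, one_smul, mul_one]
      rw [hsm]
      refine Submodule.smul_mem _ _ ?_
      obtain ⟨y, rfl⟩ := hsurj m
      have hy : φ y = ∑ k : Fin s, y k • g k := by
        conv_lhs => rw [← Finset.univ_sum_single y]
        rw [map_sum]
        exact Finset.sum_congr rfl fun k _ => hφ' k (y k)
      rw [hy]
      have hmk : (LocalizedModule.mk (∑ k : Fin s, y k • g k) 1 : LocalizedModule W M)
          = ∑ k : Fin s, y k • LocalizedModule.mk (g k) 1 := by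
        rw [show (LocalizedModule.mk (∑ k : Fin s, y k • g k) 1 : LocalizedModule W M)
            = LocalizedModule.mkLinearMap W M (∑ k : Fin s, y k • g k) from rfl]
        rw [map_sum]
        exact Finset.sum_congr rfl fun k _ => by
          rw [LinearMap.map_smul, LocalizedModule.mkLinearMap_apply]
      rw [hmk]
      refine Submodule.sum_mem _ fun k _ => ?_
      have h7 : y k • (LocalizedModule.mk (g k) 1 : LocalizedModule W M)
          = algebraMap A L (y k) • LocalizedModule.mk (g k) 1 := by
        rw [algebraMap_smul]
      rw [h7]
      exact Submodule.smul_mem _ _ (key k)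
end

section
/- Let A = K[x₁,…,xₙ] be a polynomial ring over a field K of prime characteristic p, let J be an ideal of A, and let e ≥ 1. Then the set of ideals L of A satisfying J ⊆ L^{[p^e]} has a least element with respect to inclusion; that is, I_e(J) exists: there is an ideal I_e(J) of A with J ⊆ I_e(J)^{[p^e]} which is contained in every ideal L of A with J ⊆ L^{[p^e]}. -/
open MvPolynomial

universe u

section Exponents

variable {n : ℕ}

/-- Componentwise division of an exponent vector by `q`. -/
noncomputable def expDiv (q : ℕ) (d : Fin n →₀ ℕ) : Fin n →₀ ℕ := d.mapRange (· / q) (Nat.zero_div q)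

/-- Componentwise remainder of an exponent vector mod `q`. -/
noncomputable def expMod (q : ℕ) (d : Fin n →₀ ℕ) : Fin n →₀ ℕ := d.mapRange (· % q) (Nat.zero_mod q)

lemma expMod_smul_add (q : ℕ) (c d : Fin n →₀ ℕ) : expMod q (q • c + d) = expMod q d := by
  ext i
  simp [expMod, Finsupp.mapRange_apply, Nat.mul_add_mod]

lemma expDiv_smul_add {q : ℕ} (hq : 0 < q) (c d : Fin n →₀ ℕ) :
    expDiv q (q • c + d) = c + expDiv q d := by
  ext i
  simp only [expDiv, Finsupp.mapRange_apply, Finsupp.add_apply, Finsupp.smul_apply,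
    smul_eq_mul]
  exact Nat.mul_add_div hq _ _

lemma smul_expDiv_add_expMod (q : ℕ) (d : Fin n →₀ ℕ) :
    q • expDiv q d + expMod q d = d := by
  ext i
  simp only [expDiv, expMod, Finsupp.mapRange_apply, Finsupp.add_apply, Finsupp.smul_apply,
    smul_eq_mul]
  exact Nat.div_add_mod _ _

end Exponents

section PiAux

variable {K : Type u} [CommSemiring K] {n : ℕ}

/-- The semilinear coordinate projection on polynomials. -/
noncomputable def piAux (q : ℕ) (lam : K → K) (μ : Fin n →₀ ℕ)
    (f : MvPolynomial (Fin n) K) : MvPolynomial (Fin n) K :=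
  ∑ d ∈ f.support, if expMod q d = μ then monomial (expDiv q d) (lam (coeff d f)) else 0

variable {q : ℕ} {lam : K → K} {μ : Fin n →₀ ℕ}

lemma piAux_eq_sum (h0 : lam 0 = 0) {f : MvPolynomial (Fin n) K} {s : Finset (Fin n →₀ ℕ)}
    (hs : f.support ⊆ s) :
    piAux q lam μ f
      = ∑ d ∈ s, if expMod q d = μ then monomial (expDiv q d) (lam (coeff d f)) else 0 :=
  Finset.sum_subset hs fun d _ hd => by
    rw [MvPolynomial.notMem_support_iff.mp hd, h0]
    simp

lemma piAux_zero : piAux q lam μ (0 : MvPolynomial (Fin n) K) = 0 := by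
  simp [piAux]

lemma piAux_add (h0 : lam 0 = 0) (hadd : ∀ x y, lam (x + y) = lam x + lam y)
    (f g : MvPolynomial (Fin n) K) :
    piAux q lam μ (f + g) = piAux q lam μ f + piAux q lam μ g := by
  rw [piAux_eq_sum h0 (MvPolynomial.support_add (p := f) (q := g)),
    piAux_eq_sum h0 (Finset.subset_union_left (s₁ := f.support) (s₂ := g.support)),
    piAux_eq_sum h0 (Finset.subset_union_right (s₁ := f.support) (s₂ := g.support)),
    ← Finset.sum_add_distrib]
  refine Finset.sum_congr rfl fun d _ => ?_
  rw [MvPolynomial.coeff_add, hadd]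
  split
  · rw [map_add]
  · rw [add_zero]

lemma piAux_monomial (h0 : lam 0 = 0) (d : Fin n →₀ ℕ) (c : K) :
    piAux q lam μ (monomial d c)
      = if expMod q d = μ then monomial (expDiv q d) (lam c) else 0 := by
  rw [piAux_eq_sum h0 (MvPolynomial.support_monomial_subset (s := d) (a := c)),
    Finset.sum_singleton]
  simp [MvPolynomial.coeff_monomial]

lemma piAux_filter (h0 : lam 0 = 0) (f : MvPolynomial (Fin n) K) :
    piAux q lam μ f = ∑ d ∈ f.support.filter (fun d => expMod q d = μ),
      monomial (expDiv q d) (lam (coeff d f)) := by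
  unfold piAux
  exact (Finset.sum_filter _ _).symm

end PiAux

section CharPStuff

variable {p e : ℕ} [hp : Fact p.Prime] {K : Type u} [Field K] [CharP K p] {n : ℕ}

lemma k_decomp : ∃ (ι : Type u) (b : ι → K) (lam : ι → K → K) (T : K → Finset ι),
    (∀ j x y, lam j (x + y) = lam j x + lam j y) ∧
    (∀ j c x, lam j (c ^ p ^ e * x) = c * lam j x) ∧
    (∀ x j, j ∉ T x → lam j x = 0) ∧
    (∀ x, x = ∑ j ∈ T x, (lam j x) ^ p ^ e * b j) := by
  classical
  set φ := iterateFrobenius K p e with hφ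
  set F := φ.fieldRange with hF
  set bs := Module.Basis.ofVectorSpace F K with hbs
  have φinj : Function.Injective φ := φ.injective
  have ρex : ∀ c : F, ∃ x : K, φ x = c := fun c => c.2
  choose ρ hρ using ρex
  have ρ_eq : ∀ (c : F) (x : K), φ x = (c : K) → ρ c = x := by
    intro c x hx
    apply φinj; rw [hρ, hx]
  have key : ∀ c : F, (c : K) = (ρ c) ^ p ^ e := by
    intro c; rw [← hρ c, hφ, iterateFrobenius_def]
  refine ⟨↥(Module.Basis.ofVectorSpaceIndex F K), fun j => (bs j : K),
    fun j x => ρ (bs.repr x j), fun x => (bs.repr x).support, ?_, ?_, ?_, ?_⟩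
  · intro j x y
    apply ρ_eq
    rw [map_add, map_add, Finsupp.add_apply]
    push_cast
    rw [hρ, hρ]
  · intro j c x
    have hc : φ c ∈ F := ⟨c, rfl⟩
    have hs : c ^ p ^ e * x = (⟨φ c, hc⟩ : F) • x := by
      simp [Subfield.smul_def, hφ, iterateFrobenius_def]
    rw [hs]
    apply ρ_eq
    rw [map_smul, Finsupp.smul_apply, smul_eq_mul]
    push_cast
    rw [map_mul, hρ, hφ, iterateFrobenius_def]
  · intro x j hj
    have h0 : bs.repr x j = 0 := Finsupp.notMem_support_iff.mp hj
    show ρ (bs.repr x j) = 0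
    rw [h0]
    apply ρ_eq
    rw [map_zero]; rfl
  · intro x
    conv_lhs => rw [← bs.linearCombination_repr x]
    rw [Finsupp.linearCombination_apply, Finsupp.sum]
    refine Finset.sum_congr rfl fun j hj => ?_
    show (bs.repr x j : F) • bs j = ρ (bs.repr x j) ^ p ^ e * bs j
    rw [Subfield.smul_def, ← key, smul_eq_mul]

lemma piAux_semilinear {lam : K → K} (h0 : lam 0 = 0)
    (hadd : ∀ x y, lam (x + y) = lam x + lam y)
    (hsemi : ∀ c x, lam (c ^ p ^ e * x) = c * lam x) (μ : Fin n →₀ ℕ)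
    (g f : MvPolynomial (Fin n) K) :
    piAux (p ^ e) lam μ (g ^ p ^ e * f) = g * piAux (p ^ e) lam μ f := by
  have hq : 0 < p ^ e := pow_pos hp.out.pos e
  induction g using MvPolynomial.induction_on' with
  | add g₁ g₂ ih1 ih2 =>
    rw [add_pow_char_pow, add_mul, piAux_add h0 hadd, ih1, ih2, add_mul]
  | monomial d c =>
    induction f using MvPolynomial.induction_on' with
    | add f₁ f₂ ih1 ih2 =>
      rw [mul_add, piAux_add h0 hadd, ih1, ih2, piAux_add h0 hadd, mul_add]
    | monomial d' c' =>
      rw [monomial_pow, monomial_mul, piAux_monomial h0, piAux_monomial h0,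
        expMod_smul_add, expDiv_smul_add hq]
      by_cases hμ : expMod (p ^ e) d' = μ
      · rw [if_pos hμ, if_pos hμ, hsemi, monomial_mul]
      · rw [if_neg hμ, if_neg hμ, mul_zero]

lemma decomp {ι : Type u} [DecidableEq ι] (b : ι → K) (lam : ι → K → K) (T : K → Finset ι)
    (h0 : ∀ j, lam j 0 = 0)
    (hlT : ∀ x j, j ∉ T x → lam j x = 0)
    (hdec : ∀ x, x = ∑ j ∈ T x, (lam j x) ^ p ^ e * b j)
    (f : MvPolynomial (Fin n) K) :
    f = ∑ μ ∈ f.support.image (expMod (p ^ e)),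
        ∑ j ∈ f.support.biUnion (fun d => T (coeff d f)),
          monomial μ (b j) * (piAux (p ^ e) (lam j) μ f) ^ p ^ e := by
  classical
  have hq : 0 < p ^ e := pow_pos hp.out.pos e
  set Tf := f.support.biUnion (fun d => T (coeff d f)) with hTf
  have hπ : ∀ (μ : Fin n →₀ ℕ) (j : ι),
      monomial μ (b j) * (piAux (p ^ e) (lam j) μ f) ^ p ^ e
        = ∑ d ∈ f.support.filter (fun d => expMod (p ^ e) d = μ),
            monomial d ((lam j (coeff d f)) ^ p ^ e * b j) := by
    intro μ j
    rw [piAux_filter (h0 j), sum_pow_char_pow, Finset.mul_sum]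
    refine Finset.sum_congr rfl fun d hd => ?_
    have hdμ : expMod (p ^ e) d = μ := (Finset.mem_filter.mp hd).2
    rw [monomial_pow, monomial_mul, ← hdμ, add_comm (expMod (p ^ e) d),
      smul_expDiv_add_expMod, mul_comm (b j)]
  calc f = ∑ d ∈ f.support, monomial d (coeff d f) := as_sum f
    _ = ∑ μ ∈ f.support.image (expMod (p ^ e)),
          ∑ d ∈ f.support.filter (fun d => expMod (p ^ e) d = μ),
            monomial d (coeff d f) :=
        (Finset.sum_fiberwise_of_maps_to (fun d hd => Finset.mem_image_of_mem _ hd) _).symm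
    _ = ∑ μ ∈ f.support.image (expMod (p ^ e)),
          ∑ d ∈ f.support.filter (fun d => expMod (p ^ e) d = μ),
            ∑ j ∈ Tf, monomial d ((lam j (coeff d f)) ^ p ^ e * b j) := by
        refine Finset.sum_congr rfl fun μ _ => Finset.sum_congr rfl fun d hd => ?_
        have hdsup : d ∈ f.support := (Finset.mem_filter.mp hd).1
        have hsub : T (coeff d f) ⊆ Tf := fun j hj =>
          Finset.mem_biUnion.mpr ⟨d, hdsup, hj⟩
        have hext : ∑ j ∈ T (coeff d f), (lam j (coeff d f)) ^ p ^ e * b j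
            = ∑ j ∈ Tf, (lam j (coeff d f)) ^ p ^ e * b j :=
          Finset.sum_subset hsub fun j _ hj => by
            rw [hlT _ _ hj, zero_pow hq.ne', zero_mul]
        have : coeff d f = ∑ j ∈ Tf, (lam j (coeff d f)) ^ p ^ e * b j :=
          (hdec (coeff d f)).trans hext
        conv_lhs => rw [this]
        rw [map_sum]
    _ = ∑ μ ∈ f.support.image (expMod (p ^ e)),
          ∑ j ∈ Tf,
            ∑ d ∈ f.support.filter (fun d => expMod (p ^ e) d = μ),
              monomial d ((lam j (coeff d f)) ^ p ^ e * b j) := by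
        exact Finset.sum_congr rfl fun μ _ => Finset.sum_comm
    _ = _ := by
        refine Finset.sum_congr rfl fun μ _ => Finset.sum_congr rfl fun j _ => ?_
        rw [hπ μ j]

lemma piAux_mem_of_mem_frobeniusPower {lam : K → K} (h0 : lam 0 = 0)
    (hadd : ∀ x y, lam (x + y) = lam x + lam y)
    (hsemi : ∀ c x, lam (c ^ p ^ e * x) = c * lam x) (μ : Fin n →₀ ℕ)
    (L : Ideal (MvPolynomial (Fin n) K)) {x : MvPolynomial (Fin n) K}
    (hx : x ∈ frobeniusPower p e L) :
    piAux (p ^ e) lam μ x ∈ L := by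
  have H : ∀ g, piAux (p ^ e) lam μ (g * x) ∈ L := by
    induction hx using Submodule.span_induction with
    | mem y hy =>
      obtain ⟨l, hl, rfl⟩ := hy
      intro g
      rw [mul_comm, piAux_semilinear h0 hadd hsemi]
      exact Ideal.mul_mem_right _ _ hl
    | zero =>
      intro g
      rw [mul_zero, piAux_zero]
      exact L.zero_mem
    | add y z _ _ ihy ihz =>
      intro g
      rw [mul_add, piAux_add h0 hadd]
      exact L.add_mem (ihy g) (ihz g)
    | smul a y _ ih =>
      intro g
      rw [smul_eq_mul, ← mul_assoc]
      exact ih (g * a)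
  simpa using H 1

end CharPStuff

/-- Let `A = K[x₁, …, xₙ]` be a polynomial ring over a field `K` of prime
characteristic `p`, let `J ⊆ A` be an ideal and `e ≥ 1`. Then the set of ideals `L`
of `A` with `J ⊆ L^{[p^e]}` has a least element with respect to inclusion; i.e.
`I_e(J)` exists. -/
theorem Ie_exists (p n : ℕ) (hp : p.Prime) (K : Type*) [Field K] [CharP K p]
    (J : Ideal (MvPolynomial (Fin n) K)) (e : ℕ) (he : 1 ≤ e) :
    ∃ L₀ : Ideal (MvPolynomial (Fin n) K),
      J ≤ frobeniusPower p e L₀ ∧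
        ∀ L : Ideal (MvPolynomial (Fin n) K), J ≤ frobeniusPower p e L → L₀ ≤ L := by
  classical
  haveI := Fact.mk hp
  obtain ⟨ι, b, lam, T, hladd, hlsemi, hlT, hdec⟩ := k_decomp (p := p) (e := e) (K := K)
  have hl0 : ∀ j, lam j 0 = 0 := by
    intro j
    have := hladd j 0 0
    rw [add_zero] at this
    exact (left_eq_add.mp this)
  set S : Set (MvPolynomial (Fin n) K) :=
    { g | ∃ f ∈ J, ∃ μ : Fin n →₀ ℕ, ∃ j : ι, g = piAux (p ^ e) (lam j) μ f } with hS
  refine ⟨Ideal.span S, ?_, ?_⟩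
  · intro f hf
    have hd := decomp b lam T hl0 hlT hdec f
    rw [hd]
    refine Ideal.sum_mem _ fun μ _ => Ideal.sum_mem _ fun j _ => ?_
    refine Ideal.mul_mem_left _ _ ?_
    show (piAux (p ^ e) (lam j) μ f) ^ p ^ e ∈ frobeniusPower p e (Ideal.span S)
    refine Ideal.subset_span ⟨piAux (p ^ e) (lam j) μ f, ?_, rfl⟩
    exact Ideal.subset_span ⟨f, hf, μ, j, rfl⟩
  · intro L hL
    rw [Ideal.span_le]
    rintro g ⟨f, hf, μ, j, rfl⟩
    exact piAux_mem_of_mem_frobeniusPower (hl0 j) (hladd j) (hlsemi j) μ L (hL hf)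
end
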